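/- arXiv:2102.11685 — 3 statements merged into one kernel-verified Lean document; each statement's English description precedes it below -/
import Mathlib

section
/- There exists a constant C > 0 (independent of u and g) with the following property. Let u : [0,1] × ℝ³ → ℝ be continuous and 1-periodic in each of the three spatial coordinates. Assume that on (0,1] × ℝ³ the partial derivative ∂ₜu and all second spatial partial derivatives of u exist and are continuous, and that there is a bounded measurable function g : (0,1] × ℝ³ → ℝ such that ∂ₜu(t,x) − Δu(t,x) = −u(t,x)³ + g(t,x) for every (t,x) ∈ (0,1] × ℝ³, where Δu denotes the sum of the second partial derivatives of u in the three spatial variables. Then for every (t,x) ∈ (0,1] × ℝ³ one has |u(t,x)| ≤ C · max( t^{−1/2} , ‖g‖_∞^{1/3} ), where ‖g‖_∞ = sup_{(s,y) ∈ (0,1]×ℝ³} |g(s,y)|. -/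
open Set Filter Topology

private lemma chme_shift_int (u : ℝ → (Fin 3 → ℝ) → ℝ)
    (hper : ∀ t : ℝ, ∀ x : Fin 3 → ℝ, ∀ i : Fin 3,
      u t (fun j => x j + if j = i then 1 else 0) = u t x)
    (t : ℝ) (i : Fin 3) :
    ∀ (n : ℤ) (x : Fin 3 → ℝ),
      u t (fun j => x j + if j = i then (n : ℝ) else 0) = u t x := by
  intro n
  induction n using Int.induction_on with
  | zero => intro x; simp
  | succ n ih =>
    intro x
    have h1 := hper t (fun j => x j + if j = i then (n : ℝ) else 0) i
    have h2 : (fun j => (x j + if j = i then (n : ℝ) else 0) + if j = i then (1:ℝ) else 0)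
        = fun j => x j + if j = i then (((n : ℤ) + 1 : ℤ) : ℝ) else 0 := by
      funext j; by_cases h : j = i <;> simp [h] <;> push_cast <;> ring
    rw [h2] at h1
    exact h1.trans (ih x)
  | pred n ih =>
    intro x
    have h1 := hper t (fun j => x j + if j = i then ((-(n:ℤ) - 1 : ℤ) : ℝ) else 0) i
    have h2 : (fun j => (x j + if j = i then ((-(n:ℤ) - 1 : ℤ) : ℝ) else 0) + if j = i then (1:ℝ) else 0)
        = fun j => x j + if j = i then ((-(n:ℤ) : ℤ) : ℝ) else 0 := by
      funext j; by_cases h : j = i <;> simp [h] <;> push_cast <;> ring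
    rw [h2] at h1
    exact h1.symm.trans (ih x)

private lemma chme_fract (u : ℝ → (Fin 3 → ℝ) → ℝ)
    (hper : ∀ t : ℝ, ∀ x : Fin 3 → ℝ, ∀ i : Fin 3,
      u t (fun j => x j + if j = i then 1 else 0) = u t x)
    (t : ℝ) (x : Fin 3 → ℝ) :
    u t (fun j => Int.fract (x j)) = u t x := by
  have step := chme_shift_int u hper t
  have gen : ∀ (y : Fin 3 → ℝ) (a : Fin 3 → ℤ), u t (fun j => y j + (a j : ℝ)) = u t y := by
    intro y a
    have e1 : (fun j => y j + (a j : ℝ)) =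
        (fun j => ((fun j' => ((fun j'' => y j'' + if j'' = (0:Fin 3) then ((a 0 : ℤ) : ℝ) else 0) j'
          + if j' = (1:Fin 3) then ((a 1 : ℤ) : ℝ) else 0)) j
          + if j = (2:Fin 3) then ((a 2 : ℤ) : ℝ) else 0)) := by
      funext j; fin_cases j <;> norm_num [Fin.ext_iff] <;> rfl
    rw [e1]
    exact (step 2 (a 2) _).trans ((step 1 (a 1) _).trans (step 0 (a 0) _))
  have e2 : (fun j => Int.fract (x j)) = fun j => x j + ((-⌊x j⌋ : ℤ) : ℝ) := by
    funext j; simp only [Int.fract]; push_cast; ring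
  rw [e2]
  exact gen x (fun j => -⌊x j⌋)

private lemma chme_onesided
    (u g ut : ℝ → (Fin 3 → ℝ) → ℝ)
    (ux : Fin 3 → ℝ → (Fin 3 → ℝ) → ℝ)
    (uxx : Fin 3 → Fin 3 → ℝ → (Fin 3 → ℝ) → ℝ) (Mg : ℝ)
    (hu : ContinuousOn (fun p : ℝ × (Fin 3 → ℝ) => u p.1 p.2) (Icc (0:ℝ) 1 ×ˢ univ))
    (hper : ∀ t : ℝ, ∀ x : Fin 3 → ℝ, ∀ i : Fin 3,
      u t (fun j => x j + if j = i then 1 else 0) = u t x)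
    (hut : ∀ x : Fin 3 → ℝ, ∀ t ∈ Ioc (0:ℝ) 1,
      HasDerivWithinAt (fun s => u s x) (ut t x) (Ioc (0:ℝ) 1) t)
    (hux : ∀ i : Fin 3, ∀ t ∈ Ioc (0:ℝ) 1, ∀ x : Fin 3 → ℝ,
      HasDerivAt (fun s => u t (Function.update x i s)) (ux i t x) (x i))
    (huxx : ∀ i j : Fin 3, ∀ t ∈ Ioc (0:ℝ) 1, ∀ x : Fin 3 → ℝ,
      HasDerivAt (fun s => ux i t (Function.update x j s)) (uxx i j t x) (x j))
    (hgb : ∀ t ∈ Ioc (0:ℝ) 1, ∀ x : Fin 3 → ℝ, |g t x| ≤ Mg)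
    (hpde : ∀ t ∈ Ioc (0:ℝ) 1, ∀ x : Fin 3 → ℝ,
      ut t x - ∑ i : Fin 3, uxx i i t x = -(u t x) ^ 3 + g t x) :
    ∀ t ∈ Ioc (0:ℝ) 1, ∀ x : Fin 3 → ℝ,
      u t x ≤ t ^ (-(1:ℝ)/2) + Mg ^ ((1:ℝ)/3) := by
  by_contra hcon
  push_neg at hcon
  obtain ⟨t₀, ht₀, x₀, hx₀⟩ := hcon
  have hMg : 0 ≤ Mg := le_trans (abs_nonneg _) (hgb 1 ⟨one_pos, le_refl 1⟩ 0)
  obtain ⟨B, hB⟩ : ∃ B : ℝ, B = Mg ^ ((1:ℝ)/3) := ⟨_, rfl⟩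
  rw [← hB] at hx₀
  have hB0 : 0 ≤ B := by rw [hB]; exact Real.rpow_nonneg hMg _
  have hB3 : B ^ (3:ℕ) = Mg := by
    rw [hB, ← Real.rpow_natCast (Mg ^ ((1:ℝ)/3)) 3, ← Real.rpow_mul hMg]
    norm_num
  -- a bound for |u| on the compact set [0,1] × [0,1]³
  have hK0 : IsCompact (Icc (0:ℝ) 1 ×ˢ Icc (0 : Fin 3 → ℝ) 1) :=
    isCompact_Icc.prod isCompact_Icc
  obtain ⟨M0, hM0⟩ := hK0.exists_bound_of_continuousOn
    (hu.mono (prod_mono subset_rfl (subset_univ _)))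
  obtain ⟨M, hMdef⟩ : ∃ M : ℝ, M = max M0 0 := ⟨_, rfl⟩
  have hMnn : 0 ≤ M := by rw [hMdef]; exact le_max_right _ _
  have hMbound : ∀ t ∈ Icc (0:ℝ) 1, ∀ x : Fin 3 → ℝ, |u t x| ≤ M := by
    intro t ht x
    have hmem : ((t, fun j => Int.fract (x j)) : ℝ × (Fin 3 → ℝ)) ∈
        Icc (0:ℝ) 1 ×ˢ Icc (0 : Fin 3 → ℝ) 1 := by
      refine ⟨ht, ?_⟩
      rw [mem_Icc]
      exact ⟨fun j => Int.fract_nonneg _, fun j => (Int.fract_lt_one _).le⟩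
    have h5 := hM0 _ hmem
    rw [Real.norm_eq_abs] at h5
    calc |u t x| = |u t (fun j => Int.fract (x j))| := by rw [chme_fract u hper]
    _ ≤ M0 := h5
    _ ≤ M := by rw [hMdef]; exact le_max_left _ _
  -- choice of ε
  have hM1 : (0:ℝ) < M + 1 := by linarith
  obtain ⟨ε, hεdef⟩ : ∃ e : ℝ, e = min t₀ ((M + 1) ^ (-(2:ℝ))) := ⟨_, rfl⟩
  have hε0 : 0 < ε := by
    rw [hεdef]; exact lt_min ht₀.1 (Real.rpow_pos_of_pos hM1 _)
  have hεt₀ : ε ≤ t₀ := by rw [hεdef]; exact min_le_left _ _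
  have hε1 : ε ≤ 1 := hεt₀.trans ht₀.2
  have hεbound : M + 1 ≤ ε ^ (-(1:ℝ)/2) := by
    have h1 : ε ≤ (M + 1) ^ (-(2:ℝ)) := by rw [hεdef]; exact min_le_right _ _
    have h2 := Real.rpow_le_rpow_of_nonpos hε0 h1 (by norm_num : -(1:ℝ)/2 ≤ 0)
    have h3 : ((M + 1) ^ (-(2:ℝ))) ^ (-(1:ℝ)/2) = M + 1 := by
      rw [← Real.rpow_mul hM1.le]
      norm_num
    linarith [h2, h3.ge, h3.le]
  -- the function F and its maximum on K = [ε,1] × [0,1]³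
  obtain ⟨F, hF⟩ : ∃ F : ℝ × (Fin 3 → ℝ) → ℝ,
      F = fun p => u p.1 p.2 - (p.1 ^ (-(1:ℝ)/2) + B) := ⟨_, rfl⟩
  have hKc : IsCompact (Icc ε 1 ×ˢ Icc (0 : Fin 3 → ℝ) 1) :=
    isCompact_Icc.prod isCompact_Icc
  have hKsub : (Icc ε 1 ×ˢ Icc (0 : Fin 3 → ℝ) 1) ⊆ Icc (0:ℝ) 1 ×ˢ univ :=
    prod_mono (Icc_subset_Icc hε0.le le_rfl) (subset_univ _)
  have hFc : ContinuousOn F (Icc ε 1 ×ˢ Icc (0 : Fin 3 → ℝ) 1) := by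
    rw [hF]
    apply ContinuousOn.sub (hu.mono hKsub)
    apply ContinuousOn.add _ continuousOn_const
    apply ContinuousOn.rpow_const (continuous_fst.continuousOn)
    intro p hp
    exact Or.inl (ne_of_gt (lt_of_lt_of_le hε0 hp.1.1))
  have hKne : (Icc ε 1 ×ˢ Icc (0 : Fin 3 → ℝ) 1).Nonempty := by
    refine ⟨(t₀, fun _ => 0), ⟨⟨hεt₀, ht₀.2⟩, ?_⟩⟩
    rw [mem_Icc]
    exact ⟨le_refl _, fun j => zero_le_one⟩
  obtain ⟨⟨tstar, xstar⟩, hpK, hmax⟩ := hKc.exists_isMaxOn hKne hFc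
  have hpK1 : tstar ∈ Icc ε 1 := hpK.1
  -- global maximality over Icc ε 1 × ℝ³
  have hglob : ∀ s ∈ Icc ε 1, ∀ y : Fin 3 → ℝ, F (s, y) ≤ F (tstar, xstar) := by
    intro s hs y
    have h1 : F (s, y) = F (s, fun j => Int.fract (y j)) := by
      rw [hF]
      simp only
      rw [chme_fract u hper]
    rw [h1]
    apply hmax
    refine ⟨hs, ?_⟩
    rw [mem_Icc]
    exact ⟨fun j => Int.fract_nonneg _, fun j => (Int.fract_lt_one _).le⟩
  have hFstar : F (tstar, xstar) = u tstar xstar - (tstar ^ (-(1:ℝ)/2) + B) := by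
    rw [hF]
  have hFpos : 0 < F (tstar, xstar) := by
    have h1 := hglob t₀ ⟨hεt₀, ht₀.2⟩ x₀
    have h2 : F (t₀, x₀) = u t₀ x₀ - (t₀ ^ (-(1:ℝ)/2) + B) := by rw [hF]
    linarith [hx₀]
  -- tstar > ε
  have htε : ε < tstar := by
    rcases lt_or_eq_of_le hpK1.1 with h | h
    · exact h
    · exfalso
      have h1 : |u tstar xstar| ≤ M := hMbound tstar ⟨hε0.le.trans hpK1.1, hpK1.2⟩ xstar
      have h3 : M + 1 ≤ tstar ^ (-(1:ℝ)/2) := by rw [← h]; exact hεbound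
      have h4 := abs_le.mp h1
      linarith [hFpos, hFstar.le, hFstar.ge, h3, h4.2, hB0]
  have htmem : tstar ∈ Ioc (0:ℝ) 1 := ⟨hε0.trans htε, hpK1.2⟩
  have htpos : 0 < tstar := htmem.1
  -- time derivative bound
  obtain ⟨D, hD⟩ : ∃ D : ℝ,
      D = ut tstar xstar - (-(1:ℝ)/2) * tstar ^ (-(1:ℝ)/2 - 1) := ⟨_, rfl⟩
  have hfd : HasDerivWithinAt (fun s => u s xstar - (s ^ (-(1:ℝ)/2) + B)) D
      (Ioc (0:ℝ) 1) tstar := by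
    rw [hD]
    exact (hut xstar tstar htmem).sub
      (((Real.hasDerivAt_rpow_const (Or.inl htpos.ne')).add_const B).hasDerivWithinAt)
  have hD0 : 0 ≤ D := by
    have hslope := hasDerivWithinAt_iff_tendsto_slope.mp hfd
    have hsub : Ioo ε tstar ⊆ Ioc (0:ℝ) 1 \ {tstar} := by
      intro s hs
      exact ⟨⟨hε0.trans hs.1, hs.2.le.trans htmem.2⟩, ne_of_lt hs.2⟩
    have hle : 𝓝[Ioo ε tstar] tstar ≤ 𝓝[Ioc (0:ℝ) 1 \ {tstar}] tstar :=
      nhdsWithin_mono _ hsub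
    haveI : (𝓝[Ioo ε tstar] tstar).NeBot := right_nhdsWithin_Ioo_neBot htε
    refine ge_of_tendsto (hslope.mono_left hle) ?_
    filter_upwards [self_mem_nhdsWithin] with s hs
    have h1 : F (s, xstar) ≤ F (tstar, xstar) :=
      hglob s ⟨hs.1.le, hs.2.le.trans htmem.2⟩ xstar
    have h3 : F (s, xstar) = u s xstar - (s ^ (-(1:ℝ)/2) + B) := by rw [hF]
    rw [slope_def_field]
    apply div_nonneg_of_nonpos
    · linarith [h1, hFstar.le, hFstar.ge, h3.le, h3.ge]
    · linarith [hs.2]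
  -- spatial second derivative bounds
  have huxxle : ∀ i : Fin 3, uxx i i tstar xstar ≤ 0 := by
    intro i
    by_contra hpos'
    push_neg at hpos'
    have hmaxi : ∀ s : ℝ, u tstar (Function.update xstar i s) ≤ u tstar xstar := by
      intro s
      have h1 := hglob tstar hpK1 (Function.update xstar i s)
      have h3 : F (tstar, Function.update xstar i s)
          = u tstar (Function.update xstar i s) - (tstar ^ (-(1:ℝ)/2) + B) := by rw [hF]
      linarith [hFstar.le, hFstar.ge, h3.le, h3.ge]
    have hH : ∀ s : ℝ, HasDerivAt (fun r => u tstar (Function.update xstar i r))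
        (ux i tstar (Function.update xstar i s)) s := by
      intro s
      have h1 := hux i tstar htmem (Function.update xstar i s)
      simpa [Function.update_idem, Function.update_self] using h1
    have hH' : HasDerivAt (fun s => ux i tstar (Function.update xstar i s))
        (uxx i i tstar xstar) (xstar i) := huxx i i tstar htmem xstar
    have hupd : Function.update xstar i (xstar i) = xstar := Function.update_eq_self i xstar
    have hHa : ux i tstar (Function.update xstar i (xstar i)) = 0 := by
      have hlm : IsLocalMax (fun r => u tstar (Function.update xstar i r)) (xstar i) := by
        apply Filter.Eventually.of_forall
        intro y
        show u tstar (Function.update xstar i y) ≤ u tstar (Function.update xstar i (xstar i))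
        rw [hupd]
        exact hmaxi y
      exact hlm.hasDerivAt_eq_zero (hH (xstar i))
    rw [hupd] at hHa
    -- positivity of H just to the right of xstar i
    have hslope2 : Filter.Tendsto (slope (fun s => ux i tstar (Function.update xstar i s))
        (xstar i)) (𝓝[≠] (xstar i)) (𝓝 (uxx i i tstar xstar)) :=
      hasDerivAt_iff_tendsto_slope.mp hH'
    have hev : ∀ᶠ s in 𝓝[>] (xstar i),
        0 < slope (fun s => ux i tstar (Function.update xstar i s)) (xstar i) s := by
      have hle2 : 𝓝[Ioi (xstar i)] (xstar i) ≤ 𝓝[≠] (xstar i) :=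
        nhdsWithin_mono _ (fun s hs => ne_of_gt hs)
      exact (hslope2.mono_left hle2).eventually (eventually_gt_nhds hpos')
    obtain ⟨b, hb, hbsub⟩ := mem_nhdsGT_iff_exists_Ioc_subset.mp hev
    have hb' : xstar i < b := hb
    have hHposIoc : ∀ s ∈ Ioc (xstar i) b, 0 < ux i tstar (Function.update xstar i s) := by
      intro s hs
      have h1 : 0 < slope (fun s => ux i tstar (Function.update xstar i s)) (xstar i) s :=
        hbsub hs
      rw [slope_def_field] at h1
      simp only [hupd, hHa, sub_zero] at h1
      have h2 : 0 < s - xstar i := sub_pos.mpr hs.1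
      have h4 := mul_pos h1 h2
      rwa [div_mul_cancel₀ _ (ne_of_gt h2)] at h4
    have hcont : ContinuousOn (fun r => u tstar (Function.update xstar i r))
        (Icc (xstar i) b) := fun r _ => (hH r).continuousAt.continuousWithinAt
    obtain ⟨c, hc, hceq⟩ := exists_hasDerivAt_eq_slope
      (fun r => u tstar (Function.update xstar i r))
      (fun s => ux i tstar (Function.update xstar i s)) hb' hcont (fun r _ => hH r)
    have hHc : 0 < ux i tstar (Function.update xstar i c) := hHposIoc c ⟨hc.1, hc.2.le⟩
    have hba : 0 < b - xstar i := sub_pos.mpr hb'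
    rw [hceq] at hHc
    have h5 : u tstar (Function.update xstar i (xstar i))
        < u tstar (Function.update xstar i b) := by
      have h6 := mul_pos hHc hba
      rw [div_mul_cancel₀ _ (ne_of_gt hba)] at h6
      linarith
    rw [hupd] at h5
    exact absurd (hmaxi b) (not_le.mpr h5)
  have hsum : ∑ i : Fin 3, uxx i i tstar xstar ≤ 0 :=
    Finset.sum_nonpos fun i _ => huxxle i
  -- conclude
  obtain ⟨p, hp⟩ : ∃ p : ℝ, p = tstar ^ (-(1:ℝ)/2) := ⟨_, rfl⟩
  have hp0 : 0 < p := by rw [hp]; exact Real.rpow_pos_of_pos htpos _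
  have hq : tstar ^ (-(1:ℝ)/2 - 1) = p ^ (3:ℕ) := by
    rw [hp, ← Real.rpow_natCast (tstar ^ (-(1:ℝ)/2)) 3, ← Real.rpow_mul htpos.le]
    norm_num
  have hub : p + B < u tstar xstar := by
    rw [hp]
    linarith [hFpos, hFstar.le, hFstar.ge]
  have hcube : (p + B) ^ (3:ℕ) < (u tstar xstar) ^ (3:ℕ) :=
    pow_lt_pow_left₀ hub (add_nonneg hp0.le hB0) (by norm_num)
  have hpde' := hpde tstar htmem xstar
  have hgle : g tstar xstar ≤ Mg := (le_abs_self _).trans (hgb tstar htmem xstar)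
  have hutlb : -(1:ℝ)/2 * p ^ (3:ℕ) ≤ ut tstar xstar := by
    have h7 : D = ut tstar xstar - (-(1:ℝ)/2) * tstar ^ (-(1:ℝ)/2 - 1) := hD
    rw [hq] at h7
    linarith [hD0]
  nlinarith [hutlb, hsum, hpde', hgle, hcube, hB3, hp0, hB0,
    mul_pos (mul_pos hp0 hp0) hp0, mul_nonneg (mul_nonneg hp0.le hp0.le) hB0,
    mul_nonneg (mul_nonneg hp0.le hB0) hB0]

/-- A maximum-principle a priori bound for the cubic heat equation on the
three-dimensional unit torus (formulated for spatially 1-periodic functions on `ℝ³`): there is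
a universal constant `C > 0` such that any continuous `u : [0,1] × ℝ³ → ℝ`, periodic in each
spatial coordinate, whose time derivative `ut` and second spatial partial derivatives `uxx i j`
exist and are continuous on `(0,1] × ℝ³` and which solves
`∂ₜ u - Δ u = -u³ + g` there for a bounded (by `Mg`) measurable `g`, satisfies
`|u(t,x)| ≤ C * max (t^(-1/2)) (Mg^(1/3))` for all `t ∈ (0,1]` and `x ∈ ℝ³`. -/
theorem cubic_heat_maximum_estimate :
    ∃ C : ℝ, 0 < C ∧
      ∀ (u g ut : ℝ → (Fin 3 → ℝ) → ℝ)
        (ux : Fin 3 → ℝ → (Fin 3 → ℝ) → ℝ)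
        (uxx : Fin 3 → Fin 3 → ℝ → (Fin 3 → ℝ) → ℝ) (Mg : ℝ),
        -- `u` is continuous on `[0,1] × ℝ³`
        ContinuousOn (fun p : ℝ × (Fin 3 → ℝ) => u p.1 p.2) (Icc (0:ℝ) 1 ×ˢ univ) →
        -- `u` is 1-periodic in each of the three spatial coordinates
        (∀ t : ℝ, ∀ x : Fin 3 → ℝ, ∀ i : Fin 3,
          u t (fun j => x j + if j = i then 1 else 0) = u t x) →
        -- the time derivative `ut` of `u` exists on `(0,1] × ℝ³` …
        (∀ x : Fin 3 → ℝ, ∀ t ∈ Ioc (0:ℝ) 1,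
          HasDerivWithinAt (fun s => u s x) (ut t x) (Ioc (0:ℝ) 1) t) →
        -- … and is continuous there
        ContinuousOn (fun p : ℝ × (Fin 3 → ℝ) => ut p.1 p.2) (Ioc (0:ℝ) 1 ×ˢ univ) →
        -- the first spatial partial derivatives `ux i` exist on `(0,1] × ℝ³`
        (∀ i : Fin 3, ∀ t ∈ Ioc (0:ℝ) 1, ∀ x : Fin 3 → ℝ,
          HasDerivAt (fun s => u t (Function.update x i s)) (ux i t x) (x i)) →
        -- all second spatial partial derivatives `uxx i j = ∂ⱼ ∂ᵢ u` exist on `(0,1] × ℝ³` …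
        (∀ i j : Fin 3, ∀ t ∈ Ioc (0:ℝ) 1, ∀ x : Fin 3 → ℝ,
          HasDerivAt (fun s => ux i t (Function.update x j s)) (uxx i j t x) (x j)) →
        -- … and are continuous there
        (∀ i j : Fin 3,
          ContinuousOn (fun p : ℝ × (Fin 3 → ℝ) => uxx i j p.1 p.2) (Ioc (0:ℝ) 1 ×ˢ univ)) →
        -- `g` is measurable and bounded by `Mg` on `(0,1] × ℝ³`
        Measurable (fun p : ℝ × (Fin 3 → ℝ) => g p.1 p.2) →
        (∀ t ∈ Ioc (0:ℝ) 1, ∀ x : Fin 3 → ℝ, |g t x| ≤ Mg) →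
        -- the PDE `∂ₜ u - Δ u = -u³ + g` holds on `(0,1] × ℝ³`
        (∀ t ∈ Ioc (0:ℝ) 1, ∀ x : Fin 3 → ℝ,
          ut t x - ∑ i : Fin 3, uxx i i t x = -(u t x) ^ 3 + g t x) →
        -- conclusion
        ∀ t ∈ Ioc (0:ℝ) 1, ∀ x : Fin 3 → ℝ,
          |u t x| ≤ C * max (t ^ (-(1:ℝ)/2)) (Mg ^ ((1:ℝ)/3)) := by
  refine ⟨2, two_pos, ?_⟩
  intro u g ut ux uxx Mg hu hper hut _hutc hux huxx _huxxc _hgm hgb hpde t ht x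
  have hupper := chme_onesided u g ut ux uxx Mg hu hper hut hux huxx hgb hpde t ht x
  have hlower := chme_onesided (fun t x => -u t x) (fun t x => -g t x) (fun t x => -ut t x)
      (fun i t x => -ux i t x) (fun i j t x => -uxx i j t x) Mg
      (hu.neg)
      (fun t x i => by show -u t (fun j => x j + if j = i then 1 else 0) = -u t x; rw [hper t x i])
      (fun x t ht' => (hut x t ht').neg)
      (fun i t ht' x => (hux i t ht' x).neg)
      (fun i j t ht' x => (huxx i j t ht' x).neg)
      (fun t ht' x => by rw [abs_neg]; exact hgb t ht' x)
      (fun t ht' x => by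
        have h := hpde t ht' x
        simp only [Finset.sum_neg_distrib]
        linear_combination -h)
      t ht x
  have h1 : t ^ (-(1:ℝ)/2) ≤ max (t ^ (-(1:ℝ)/2)) (Mg ^ ((1:ℝ)/3)) := le_max_left _ _
  have h2 : Mg ^ ((1:ℝ)/3) ≤ max (t ^ (-(1:ℝ)/2)) (Mg ^ ((1:ℝ)/3)) := le_max_right _ _
  rw [abs_le]
  constructor
  · linarith
  · linarith
end

section
/- For every κ̄ ∈ (0, 1/2) there exists a constant C > 0 such that for every x ∈ ℝ³, all 0 < ε ≤ λ ≤ 1 and every ψ : ℝ³ → ℝ which is Lipschitz with Lipschitz constant at most 1, satisfies ‖ψ‖_∞ ≤ 1 and has support in the closed unit ball, one has ∫₀^ε ∫_{ℝ³} δ^{-3/2-κ̄} ( sup_{η ∈ 𝒩₀} | ∫_{ℝ³} Ψ_ε^λ(v) η_u^δ(v) dv | ) du dδ ≤ C ε^{1/2−κ̄} λ^{-1}. -/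
open MeasureTheory Set

/-- The grid cube `□_ε^y = {z : z - y ∈ [-ε/2, ε/2)³}` of side `ε` centred at `y`. -/
def gridCube (ε : ℝ) (y : EuclideanSpace ℝ (Fin 3)) : Set (EuclideanSpace ℝ (Fin 3)) :=
  {z | ∀ i : Fin 3, z i - y i ∈ Ico (-(ε / 2)) (ε / 2)}

/-- `latticeOf ε v` is the unique point `y ∈ εℤ³` with `v ∈ □_ε^y`. -/
noncomputable def latticeOf (ε : ℝ) (v : EuclideanSpace ℝ (Fin 3)) :
    EuclideanSpace ℝ (Fin 3) :=
  (EuclideanSpace.equiv (Fin 3) ℝ).symm fun i => ε * (⌊v i / ε + 1 / 2⌋ : ℤ)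

/-- The rescaled and recentred test function `f_x^λ(z) = λ⁻³ f((z - x)/λ)`. -/
noncomputable def scaledTest (f : EuclideanSpace ℝ (Fin 3) → ℝ)
    (x : EuclideanSpace ℝ (Fin 3)) (lam : ℝ) : EuclideanSpace ℝ (Fin 3) → ℝ :=
  fun z => (lam ^ 3)⁻¹ * f (lam⁻¹ • (z - x))

/-- `Ψ_ε^λ(v) = ψ_x^λ(v) - ε⁻³ ∫_{□_ε^{y_ε(v)}} ψ_x^λ(z) dz`, the difference between `ψ_x^λ`
and its average over the `ε`-grid cube containing the argument. -/
noncomputable def PsiDiff (ψ : EuclideanSpace ℝ (Fin 3) → ℝ)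
    (x : EuclideanSpace ℝ (Fin 3)) (lam ε : ℝ) : EuclideanSpace ℝ (Fin 3) → ℝ :=
  fun v => scaledTest ψ x lam v
    - (ε ^ 3)⁻¹ * ∫ z in gridCube ε (latticeOf ε v), scaledTest ψ x lam z

/-- The set `𝒩` of bounded measurable test functions supported in the closed Euclidean unit
ball and bounded by 1. -/
def testSet : Set (EuclideanSpace ℝ (Fin 3) → ℝ) :=
  {η | Measurable η ∧ (∀ v, |η v| ≤ 1) ∧ Function.support η ⊆ Metric.closedBall 0 1}

/-- The subset `𝒩₀ ⊆ 𝒩` of mean-zero test functions. -/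
def testSetZero : Set (EuclideanSpace ℝ (Fin 3) → ℝ) :=
  {η ∈ testSet | (∫ v, η v) = 0}

noncomputable section
open scoped ENNReal
local notation "E3" => EuclideanSpace ℝ (Fin 3)

lemma aux_coord_abs_le_norm (w : E3) (i : Fin 3) : |w i| ≤ ‖w‖ := by
  rw [EuclideanSpace.norm_eq, ← Real.sqrt_sq_eq_abs (w i)]
  apply Real.sqrt_le_sqrt
  have := Finset.single_le_sum (f := fun j => ‖w j‖ ^ 2)
    (fun j _ => by positivity) (Finset.mem_univ i)
  simpa [Real.norm_eq_abs, sq_abs] using this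

lemma aux_floor_bounds {ε : ℝ} (hε : 0 < ε) (t : ℝ) :
    ε * (⌊t / ε + 1 / 2⌋ : ℤ) ≤ t + ε / 2 ∧ t + ε / 2 < ε * (⌊t / ε + 1 / 2⌋ : ℤ) + ε := by
  have h1 := Int.floor_le (t / ε + 1 / 2)
  have h2 := Int.lt_floor_add_one (t / ε + 1 / 2)
  have ht : ε * (t / ε) = t := by field_simp
  constructor
  · have := mul_le_mul_of_nonneg_left h1 hε.le
    rw [mul_add, ht] at this; linarith
  · have := mul_lt_mul_of_pos_left h2 hε
    rw [mul_add, mul_add, ht] at this; linarith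

lemma aux_mem_gridCube_latticeOf {ε : ℝ} (hε : 0 < ε) (v : E3) :
    v ∈ gridCube ε (latticeOf ε v) := by
  intro i
  obtain ⟨h1, h2⟩ := aux_floor_bounds hε (v i)
  have hl : latticeOf ε v i = ε * (⌊v i / ε + 1 / 2⌋ : ℤ) := rfl
  rw [hl]
  constructor <;> simp only [mem_Ico] <;> linarith

lemma aux_latticeOf_eq {ε : ℝ} (hε : 0 < ε) {u v : E3}
    (h : v ∈ gridCube ε (latticeOf ε u)) : latticeOf ε v = latticeOf ε u := by
  ext i
  have hi := h i
  have hl : latticeOf ε u i = ε * (⌊u i / ε + 1 / 2⌋ : ℤ) := rfl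
  rw [hl] at hi
  obtain ⟨h1, h2⟩ := hi
  show ε * (⌊v i / ε + 1 / 2⌋ : ℤ) = ε * (⌊u i / ε + 1 / 2⌋ : ℤ)
  congr 1
  have : ⌊v i / ε + 1 / 2⌋ = ⌊u i / ε + 1 / 2⌋ := by
    rw [Int.floor_eq_iff]
    constructor
    · rw [show ((⌊u i / ε + 1 / 2⌋ : ℤ) : ℝ) ≤ v i / ε + 1 / 2 ↔
        ((⌊u i / ε + 1 / 2⌋ : ℤ) : ℝ) - 1/2 ≤ v i / ε by constructor <;> intro <;> linarith,
        le_div_iff₀ hε]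
      nlinarith
    · rw [show v i / ε + 1 / 2 < ((⌊u i / ε + 1 / 2⌋ : ℤ) : ℝ) + 1 ↔
        v i / ε < ((⌊u i / ε + 1 / 2⌋ : ℤ) : ℝ) + 1/2 by constructor <;> intro <;> linarith,
        div_lt_iff₀ hε]
      nlinarith
  exact_mod_cast this

lemma aux_norm_le_of_mem_gridCube {ε : ℝ} (hε : 0 < ε) {y v z : E3}
    (hv : v ∈ gridCube ε y) (hz : z ∈ gridCube ε y) : ‖v - z‖ ≤ 2 * ε := by
  have hcoord : ∀ i, ((v - z) i) ^ 2 ≤ ε ^ 2 := by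
    intro i
    obtain ⟨a1, a2⟩ := hv i
    obtain ⟨b1, b2⟩ := hz i
    have : (v - z) i = v i - z i := rfl
    rw [this]
    nlinarith
  rw [EuclideanSpace.norm_eq]
  have : ∑ i, ‖(v - z) i‖ ^ 2 ≤ 3 * ε ^ 2 := by
    have := Finset.sum_le_sum (fun i (_ : i ∈ Finset.univ) => by
      simpa [Real.norm_eq_abs, sq_abs] using hcoord i)
    simpa [Finset.sum_const, Finset.card_univ] using this
  calc √(∑ i, ‖(v - z) i‖ ^ 2) ≤ √(3 * ε ^ 2) := Real.sqrt_le_sqrt this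
    _ ≤ √((2*ε)^2) := Real.sqrt_le_sqrt (by nlinarith)
    _ = 2 * ε := by rw [Real.sqrt_sq (by positivity)]

lemma aux_supp_zero {f : E3 → ℝ} (hf : Function.support f ⊆ Metric.closedBall 0 1)
    {w : E3} (h : 1 < ‖w‖) : f w = 0 := by
  by_contra h0
  have := hf (Function.mem_support.2 h0)
  rw [Metric.mem_closedBall, dist_zero_right] at this
  linarith

lemma aux_scaledTest_bound {f : E3 → ℝ} (hf : ∀ z, |f z| ≤ 1) (x : E3) {lam : ℝ}
    (hlam : 0 < lam) (v : E3) : |scaledTest f x lam v| ≤ (lam ^ 3)⁻¹ := by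
  rw [scaledTest, abs_mul, abs_of_nonneg (by positivity : (0:ℝ) ≤ (lam ^ 3)⁻¹)]
  calc (lam ^ 3)⁻¹ * |f (lam⁻¹ • (v - x))| ≤ (lam ^ 3)⁻¹ * 1 :=
        mul_le_mul_of_nonneg_left (hf _) (by positivity)
    _ = (lam ^ 3)⁻¹ := mul_one _

lemma aux_scaledTest_zero {f : E3 → ℝ} (hf : Function.support f ⊆ Metric.closedBall 0 1)
    {x : E3} {lam : ℝ} (hlam : 0 < lam) {v : E3} (h : lam < ‖v - x‖) :
    scaledTest f x lam v = 0 := by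
  rw [scaledTest]
  have : 1 < ‖lam⁻¹ • (v - x)‖ := by
    rw [norm_smul, Real.norm_eq_abs, abs_of_pos (by positivity)]
    rw [lt_inv_mul_iff₀ hlam, mul_one]; exact h
  rw [aux_supp_zero hf this, mul_zero]

lemma aux_scaledTest_lip {ψ : E3 → ℝ} (hψ : LipschitzWith 1 ψ) {x : E3} {lam : ℝ}
    (hlam : 0 < lam) (a b : E3) :
    |scaledTest ψ x lam a - scaledTest ψ x lam b| ≤ ‖a - b‖ / lam ^ 4 := by
  show |(lam ^ 3)⁻¹ * ψ (lam⁻¹ • (a - x)) - (lam ^ 3)⁻¹ * ψ (lam⁻¹ • (b - x))| ≤ _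
  rw [← mul_sub, abs_mul, abs_of_nonneg (by positivity : (0:ℝ) ≤ (lam ^ 3)⁻¹)]
  have hd : |ψ (lam⁻¹ • (a - x)) - ψ (lam⁻¹ • (b - x))| ≤ lam⁻¹ * ‖a - b‖ := by
    have := hψ.dist_le_mul (lam⁻¹ • (a - x)) (lam⁻¹ • (b - x))
    rw [Real.dist_eq] at this
    calc |ψ (lam⁻¹ • (a - x)) - ψ (lam⁻¹ • (b - x))|
        ≤ 1 * dist (lam⁻¹ • (a - x)) (lam⁻¹ • (b - x)) := this
      _ = ‖lam⁻¹ • (a - x) - lam⁻¹ • (b - x)‖ := by rw [one_mul, dist_eq_norm]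
      _ = lam⁻¹ * ‖a - b‖ := by
          rw [← smul_sub, norm_smul, Real.norm_eq_abs, abs_of_pos (by positivity)]
          congr 2
          abel
  calc (lam ^ 3)⁻¹ * |ψ (lam⁻¹ • (a - x)) - ψ (lam⁻¹ • (b - x))|
      ≤ (lam ^ 3)⁻¹ * (lam⁻¹ * ‖a - b‖) := mul_le_mul_of_nonneg_left hd (by positivity)
    _ = ‖a - b‖ / lam ^ 4 := by field_simp

lemma aux_scaledTest_measurable {f : E3 → ℝ} (hf : Measurable f) (x : E3) (lam : ℝ) :
    Measurable (scaledTest f x lam) := by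
  apply Measurable.const_mul
  exact hf.comp (((continuous_id.sub continuous_const).const_smul lam⁻¹).measurable)

lemma aux_integral_scaledTest (f : E3 → ℝ) (u : E3) {δ : ℝ} (hδ : 0 < δ) :
    ∫ v, scaledTest f u δ v = ∫ v, f v := by
  unfold scaledTest
  rw [MeasureTheory.integral_const_mul]
  have h1 : (∫ v : E3, f (δ⁻¹ • (v - u))) = ∫ v : E3, f (δ⁻¹ • v) :=
    integral_sub_right_eq_self (fun v => f (δ⁻¹ • v)) u
  rw [h1, MeasureTheory.Measure.integral_comp_smul volume f δ⁻¹]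
  rw [finrank_euclideanSpace_fin, smul_eq_mul]
  rw [abs_of_nonneg (by positivity)]
  have : (((δ⁻¹) ^ 3)⁻¹ : ℝ) = δ ^ 3 := by field_simp
  rw [this, ← mul_assoc, inv_mul_cancel₀ (by positivity), one_mul]

lemma aux_volume_pi_set (A : Fin 3 → Set ℝ) (hA : ∀ i, MeasurableSet (A i)) :
    volume {z : E3 | ∀ i, z i ∈ A i} = ∏ i, volume (A i) := by
  have he : {z : E3 | ∀ i, z i ∈ A i}
      = (MeasurableEquiv.toLp 2 (Fin 3 → ℝ)).symm ⁻¹' (univ.pi A) := by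
    ext z
    simp only [mem_setOf_eq, mem_preimage, Set.mem_pi, mem_univ, true_implies]
    exact Iff.rfl
  rw [he, MeasurePreserving.measure_preimage
    (EuclideanSpace.volume_preserving_symm_measurableEquiv_toLp (Fin 3))
    ((MeasurableSet.univ_pi (fun i => hA i)).nullMeasurableSet), volume_pi_pi]

lemma aux_measurableSet_pi_set (A : Fin 3 → Set ℝ) (hA : ∀ i, MeasurableSet (A i)) :
    MeasurableSet {z : E3 | ∀ i, z i ∈ A i} := by
  have : {z : E3 | ∀ i, z i ∈ A i} = ⋂ i, (fun z : E3 => z i) ⁻¹' (A i) := by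
    ext z; simp
  rw [this]
  exact MeasurableSet.iInter fun i => (by fun_prop : Measurable fun z : E3 => z i) (hA i)

lemma aux_gridCube_eq (ε : ℝ) (y : E3) :
    gridCube ε y = {z : E3 | ∀ i, z i ∈ Ico (y i - ε / 2) (y i + ε / 2)} := by
  ext z
  simp only [gridCube, mem_setOf_eq, mem_Ico]
  constructor <;> intro h i <;> obtain ⟨h1, h2⟩ := h i <;> constructor <;> linarith

lemma aux_volume_gridCube {ε : ℝ} (hε : 0 ≤ ε) (y : E3) :
    volume (gridCube ε y) = ENNReal.ofReal (ε ^ 3) := by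
  rw [aux_gridCube_eq, aux_volume_pi_set _ (fun i => measurableSet_Ico)]
  simp only [Real.volume_Ico]
  have hc : ∀ i : Fin 3, ENNReal.ofReal (y i + ε / 2 - (y i - ε / 2)) = ENNReal.ofReal ε :=
    fun i => by congr 1; ring
  simp only [hc, Finset.prod_const, Finset.card_univ, Fintype.card_fin]
  rw [← ENNReal.ofReal_pow hε]

lemma aux_measurableSet_gridCube (ε : ℝ) (y : E3) : MeasurableSet (gridCube ε y) := by
  rw [aux_gridCube_eq]
  exact aux_measurableSet_pi_set _ (fun i => measurableSet_Ico)

lemma aux_toReal_volume_gridCube {ε : ℝ} (hε : 0 ≤ ε) (y : E3) :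
    (volume (gridCube ε y)).toReal = ε ^ 3 := by
  rw [aux_volume_gridCube hε, ENNReal.toReal_ofReal (by positivity)]

lemma aux_volume_box (x : E3) {r : ℝ} (hr : 0 ≤ r) :
    volume {z : E3 | ∀ i, z i ∈ Icc (x i - r) (x i + r)} = ENNReal.ofReal ((2 * r) ^ 3) := by
  rw [aux_volume_pi_set _ (fun i => measurableSet_Icc)]
  simp only [Real.volume_Icc]
  have hc : ∀ i : Fin 3, ENNReal.ofReal (x i + r - (x i - r)) = ENNReal.ofReal (2 * r) :=
    fun i => by congr 1; ring
  simp only [hc, Finset.prod_const, Finset.card_univ, Fintype.card_fin]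
  rw [← ENNReal.ofReal_pow (by positivity : (0:ℝ) ≤ 2 * r)]

lemma aux_closedBall_subset_box (x : E3) (r : ℝ) :
    Metric.closedBall x r ⊆ {z : E3 | ∀ i, z i ∈ Icc (x i - r) (x i + r)} := by
  intro z hz i
  rw [Metric.mem_closedBall, dist_eq_norm] at hz
  have h2 : |z i - x i| ≤ r := by
    have h3 : |(z - x) i| ≤ ‖z - x‖ := aux_coord_abs_le_norm (z - x) i
    have h4 : (z - x) i = z i - x i := rfl
    rw [h4] at h3
    linarith
  rw [mem_Icc]
  rw [abs_le] at h2
  constructor <;> linarith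

lemma aux_volume_closedBall_le (x : E3) {r : ℝ} (hr : 0 ≤ r) :
    volume (Metric.closedBall x r) ≤ ENNReal.ofReal (8 * r ^ 3) := by
  calc volume (Metric.closedBall x r) ≤ volume {z : E3 | ∀ i, z i ∈ Icc (x i - r) (x i + r)} :=
        measure_mono (aux_closedBall_subset_box x r)
    _ = ENNReal.ofReal ((2 * r) ^ 3) := aux_volume_box x hr
    _ = ENNReal.ofReal (8 * r ^ 3) := by congr 1; ring

lemma aux_integrable (f : E3 → ℝ) (hf : Measurable f) {u : E3} {r C : ℝ}
    (hb : ∀ v, |f v| ≤ C) (hs : ∀ v, v ∉ Metric.closedBall u r → f v = 0) :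
    Integrable f := by
  have hg : Integrable ((Metric.closedBall u r).indicator fun _ => C) := by
    refine (integrableOn_const measure_closedBall_lt_top.ne).integrable_indicator
      measurableSet_closedBall
  refine hg.mono' hf.aestronglyMeasurable (Filter.Eventually.of_forall fun v => ?_)
  by_cases hv : v ∈ Metric.closedBall u r
  · rw [Set.indicator_of_mem hv, Real.norm_eq_abs]; exact hb v
  · rw [Set.indicator_of_notMem hv, Real.norm_eq_abs, hs v hv]; simp

lemma aux_abs_integral_le (f : E3 → ℝ) (hf : Measurable f) {u : E3} {r C : ℝ}
    (hr : 0 ≤ r) (hC : 0 ≤ C)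
    (hb : ∀ v, |f v| ≤ C) (hs : ∀ v, v ∉ Metric.closedBall u r → f v = 0) :
    |∫ v, f v| ≤ C * (8 * r ^ 3) := by
  have hint := aux_integrable f hf hb hs
  have h1 : |∫ v, f v| ≤ ∫ v, |f v| := by
    have := norm_integral_le_integral_norm (μ := volume) f
    simpa [Real.norm_eq_abs] using this
  have hgint : Integrable ((Metric.closedBall u r).indicator fun _ => C) :=
    (integrableOn_const measure_closedBall_lt_top.ne).integrable_indicator
      measurableSet_closedBall
  have h2 : ∫ v, |f v| ≤ ∫ v, (Metric.closedBall u r).indicator (fun _ => C) v := by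
    refine integral_mono hint.abs hgint fun v => ?_
    by_cases hv : v ∈ Metric.closedBall u r
    · rw [Set.indicator_of_mem hv]; exact hb v
    · rw [Set.indicator_of_notMem hv, hs v hv]; simp
  have h3 : ∫ v, (Metric.closedBall u r).indicator (fun _ => C) v
      = (volume (Metric.closedBall u r)).toReal * C := by
    rw [integral_indicator_const _ measurableSet_closedBall, measureReal_def, smul_eq_mul]
  have h4 : (volume (Metric.closedBall u r)).toReal ≤ 8 * r ^ 3 := by
    refine ENNReal.toReal_le_of_le_ofReal (by positivity) ?_
    exact aux_volume_closedBall_le u hr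
  calc |∫ v, f v| ≤ (volume (Metric.closedBall u r)).toReal * C := by linarith
    _ ≤ (8 * r ^ 3) * C := by
        exact mul_le_mul_of_nonneg_right h4 hC
    _ = C * (8 * r ^ 3) := by ring

def badTimes (ε δ : ℝ) : Set ℝ :=
  {t | t - ε * (⌊t / ε + 1 / 2⌋ : ℤ) ∉ Ico (δ - ε / 2) (ε / 2 - δ)}

lemma aux_badTimes_meas (ε δ : ℝ) : MeasurableSet (badTimes ε δ) := by
  have hm : Measurable fun t : ℝ => t - ε * (⌊t / ε + 1 / 2⌋ : ℤ) := by
    apply measurable_id.sub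
    apply Measurable.const_mul
    exact (measurable_of_countable (Int.cast : ℤ → ℝ)).comp
      (Int.measurable_floor.comp ((measurable_id.div_const ε).add_const (1 / 2)))
  exact (hm measurableSet_Ico).compl

lemma aux_badTimes_vol {ε δ lam : ℝ} (hε : 0 < ε) (hδ : 0 < δ) (hδε : δ ≤ ε)
    (hεlam : ε ≤ lam) (c : ℝ) :
    volume (badTimes ε δ ∩ Icc c (c + 12 * lam)) ≤ ENNReal.ofReal (30 * lam * δ / ε) := by
  set d := c + 12 * lam with hd
  set m : ℤ := ⌈c / ε⌉ - 1 with hm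
  set M : ℤ := ⌊d / ε⌋ + 1 with hM
  set J : ℤ → Set ℝ := fun k =>
    Ico (ε * k - ε / 2) (ε * k - ε / 2 + δ) ∪ Ico (ε * k + ε / 2 - δ) (ε * k + ε / 2) with hJ
  have hsub : badTimes ε δ ∩ Icc c d ⊆ ⋃ k ∈ Finset.Icc m M, J k := by
    rintro t ⟨hbad, htc, htd⟩
    obtain ⟨hf1, hf2⟩ := aux_floor_bounds hε t
    set k : ℤ := ⌊t / ε + 1 / 2⌋ with hk
    have hkm : m ≤ k := by
      have h1 : c < ε * ((k : ℝ) + 1) := by nlinarith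
      have h2 : c / ε ≤ ((k + 1 : ℤ) : ℝ) := by
        rw [div_le_iff₀ hε]; push_cast; nlinarith
      have h3 : ⌈c / ε⌉ ≤ k + 1 := Int.ceil_le.2 h2
      omega
    have hkM : k ≤ M := by
      have h1 : ε * ((k : ℝ) - 1) < d := by nlinarith
      have h2 : ((k - 1 : ℤ) : ℝ) ≤ d / ε := by
        rw [le_div_iff₀ hε]; push_cast; nlinarith
      have h3 : k - 1 ≤ ⌊d / ε⌋ := Int.le_floor.2 h2
      omega
    refine Set.mem_biUnion (show k ∈ Finset.Icc m M by
      simp only [Finset.mem_Icc]; exact ⟨hkm, hkM⟩) ?_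
    · simp only [badTimes, mem_setOf_eq, mem_Ico, not_and_or, not_le, not_lt] at hbad
      rcases hbad with h | h
      · left; rw [mem_Ico]; constructor <;> linarith
      · right; rw [mem_Ico]; constructor <;> linarith
  calc volume (badTimes ε δ ∩ Icc c d) ≤ volume (⋃ k ∈ Finset.Icc m M, J k) :=
        measure_mono hsub
    _ ≤ ∑ k ∈ Finset.Icc m M, volume (J k) := measure_biUnion_finset_le _ _
    _ ≤ ∑ _k ∈ Finset.Icc m M, ENNReal.ofReal (2 * δ) := by
        refine Finset.sum_le_sum fun k _ => ?_
        calc volume (J k) ≤ volume (Ico (ε * k - ε / 2) (ε * k - ε / 2 + δ))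
              + volume (Ico (ε * k + ε / 2 - δ) (ε * k + ε / 2)) := measure_union_le _ _
          _ = ENNReal.ofReal δ + ENNReal.ofReal δ := by
              rw [Real.volume_Ico, Real.volume_Ico]; congr 1 <;> · congr 1; ring
          _ ≤ ENNReal.ofReal (2 * δ) := by
              rw [← ENNReal.ofReal_add hδ.le hδ.le]; apply ENNReal.ofReal_le_ofReal; linarith
    _ = (Finset.Icc m M).card • ENNReal.ofReal (2 * δ) := by rw [Finset.sum_const]
    _ ≤ ENNReal.ofReal (15 * lam / ε) * ENNReal.ofReal (2 * δ) := by
        rw [nsmul_eq_mul]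
        apply mul_le_mul_left
        have hcard : ((Finset.Icc m M).card : ℝ) ≤ 15 * lam / ε := by
          have h1 : (Finset.Icc m M).card = (M + 1 - m).toNat := Int.card_Icc m M
          have h2 : ((M + 1 - m).toNat : ℝ) ≤ 12 * lam / ε + 3 := by
            have hMr : (M : ℝ) ≤ d / ε + 1 := by
              have := Int.floor_le (d / ε); push_cast [hM]; linarith
            have hmr : (m : ℝ) ≥ c / ε - 1 := by
              have := Int.le_ceil (c / ε); push_cast [hm]; linarith
            rcases le_or_gt (M + 1 - m) 0 with h | h
            · have hlam : (0:ℝ) < lam := lt_of_lt_of_le hε hεlam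
              simp only [Int.toNat_of_nonpos h, Nat.cast_zero]; positivity
            · have hcast : (((M + 1 - m).toNat : ℕ) : ℝ) = ((M + 1 - m : ℤ) : ℝ) := by
                exact_mod_cast congrArg (fun z : ℤ => (z : ℝ)) (Int.toNat_of_nonneg h.le)
              rw [hcast]
              push_cast
              have : d / ε - c / ε = 12 * lam / ε := by rw [hd]; ring
              linarith
          rw [h1]
          have key : 12 * lam / ε + 3 ≤ 15 * lam / ε := by
            have heq : 15 * lam / ε - (12 * lam / ε + 3) = 3 * (lam - ε) / ε := by
              field_simp; ring
            have h5 : 0 ≤ 3 * (lam - ε) / ε := div_nonneg (by linarith) hε.le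
            linarith
          linarith [h2, key]
        calc ((Finset.Icc m M).card : ℝ≥0∞) = ENNReal.ofReal ((Finset.Icc m M).card : ℝ) := by
              rw [ENNReal.ofReal_natCast]
          _ ≤ ENNReal.ofReal (15 * lam / ε) := ENNReal.ofReal_le_ofReal hcard
    _ ≤ ENNReal.ofReal (30 * lam * δ / ε) := by
        have hlam : (0:ℝ) < lam := lt_of_lt_of_le hε hεlam
        rw [← ENNReal.ofReal_mul (by positivity)]
        apply ENNReal.ofReal_le_ofReal
        apply le_of_eq; field_simp; ring

-- main content
section main
variable {ψ : E3 → ℝ} {x : E3} {ε lam : ℝ}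

lemma aux_measurable_psiDiff (hψ : LipschitzWith 1 ψ) (x : E3) (lam ε : ℝ) :
    Measurable (PsiDiff ψ x lam ε) := by
  have h1 : Measurable (scaledTest ψ x lam) :=
    aux_scaledTest_measurable hψ.continuous.measurable x lam
  apply h1.sub
  apply Measurable.const_mul
  have hrep : (fun v : E3 => ∫ z in gridCube ε (latticeOf ε v), scaledTest ψ x lam z)
      = (fun k : Fin 3 → ℤ => ∫ z in gridCube ε
          ((EuclideanSpace.equiv (Fin 3) ℝ).symm fun i => ε * (k i : ℤ)), scaledTest ψ x lam z)
        ∘ (fun v : E3 => fun i : Fin 3 => ⌊v i / ε + 1 / 2⌋) := rfl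
  rw [hrep]
  apply (measurable_of_countable _).comp
  apply measurable_pi_lambda
  intro i
  exact Int.measurable_floor.comp
    (((by fun_prop : Measurable fun v : E3 => v i).div_const ε).add_const (1 / 2))

lemma aux_integrableOn_scaledTest (hψ : LipschitzWith 1 ψ)
    (hψs : Function.support ψ ⊆ Metric.closedBall 0 1) (hψb : ∀ z, |ψ z| ≤ 1)
    (hlam : 0 < lam) (s : Set E3) : IntegrableOn (scaledTest ψ x lam) s := by
  apply Integrable.integrableOn
  apply aux_integrable _ (aux_scaledTest_measurable hψ.continuous.measurable x lam)
    (aux_scaledTest_bound hψb x hlam) (u := x) (r := lam)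
  intro v hv
  rw [Metric.mem_closedBall, dist_eq_norm] at hv
  exact aux_scaledTest_zero hψs hlam (by linarith [not_le.1 hv])

lemma aux_psiDiff_bound (hψ : LipschitzWith 1 ψ)
    (hψs : Function.support ψ ⊆ Metric.closedBall 0 1) (hψb : ∀ z, |ψ z| ≤ 1)
    (hε : 0 < ε) (hεlam : ε ≤ lam) (v : E3) :
    |PsiDiff ψ x lam ε v| ≤ 2 * ε / lam ^ 4 := by
  have hlam : 0 < lam := lt_of_lt_of_le hε hεlam
  set y := latticeOf ε v with hy
  have hvmem : v ∈ gridCube ε y := aux_mem_gridCube_latticeOf hε v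
  have hIψ : IntegrableOn (scaledTest ψ x lam) (gridCube ε y) :=
    aux_integrableOn_scaledTest hψ hψs hψb hlam _
  have hfin : volume (gridCube ε y) < ⊤ := by
    rw [aux_volume_gridCube hε.le]; exact ENNReal.ofReal_lt_top
  have hconst : ∫ _z in gridCube ε y, scaledTest ψ x lam v = ε ^ 3 * scaledTest ψ x lam v := by
    rw [setIntegral_const, measureReal_def, aux_toReal_volume_gridCube hε.le, smul_eq_mul]
  have key : PsiDiff ψ x lam ε v
      = (ε ^ 3)⁻¹ * ∫ z in gridCube ε y, (scaledTest ψ x lam v - scaledTest ψ x lam z) := by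
    rw [integral_sub (integrableOn_const hfin.ne (C := scaledTest ψ x lam v)) hIψ]
    rw [hconst, PsiDiff, mul_sub, ← mul_assoc, inv_mul_cancel₀ (by positivity), one_mul, ← hy]
  rw [key, abs_mul, abs_of_nonneg (by positivity : (0:ℝ) ≤ (ε ^ 3)⁻¹)]
  have habs : |∫ z in gridCube ε y, (scaledTest ψ x lam v - scaledTest ψ x lam z)|
      ≤ ∫ z in gridCube ε y, (2 * ε / lam ^ 4) := by
    have h1 : |∫ z in gridCube ε y, (scaledTest ψ x lam v - scaledTest ψ x lam z)|
        ≤ ∫ z in gridCube ε y, |scaledTest ψ x lam v - scaledTest ψ x lam z| := by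
      have := norm_integral_le_integral_norm (μ := volume.restrict (gridCube ε y))
        (fun z => scaledTest ψ x lam v - scaledTest ψ x lam z)
      simpa [Real.norm_eq_abs] using this
    refine h1.trans (setIntegral_mono_on ?_ ?_ (aux_measurableSet_gridCube ε y) ?_)
    · exact ((integrableOn_const hfin.ne).sub hIψ).abs
    · exact integrableOn_const hfin.ne
    · intro z hz
      calc |scaledTest ψ x lam v - scaledTest ψ x lam z| ≤ ‖v - z‖ / lam ^ 4 :=
            aux_scaledTest_lip hψ hlam v z
        _ ≤ 2 * ε / lam ^ 4 := by
            gcongr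
            exact aux_norm_le_of_mem_gridCube hε hvmem hz
  have hval : (∫ _z in gridCube ε y, (2 * ε / lam ^ 4)) = ε ^ 3 * (2 * ε / lam ^ 4) := by
    rw [setIntegral_const, measureReal_def, aux_toReal_volume_gridCube hε.le, smul_eq_mul]
  calc (ε ^ 3)⁻¹ * |∫ z in gridCube ε y, (scaledTest ψ x lam v - scaledTest ψ x lam z)|
      ≤ (ε ^ 3)⁻¹ * (ε ^ 3 * (2 * ε / lam ^ 4)) := by
        rw [← hval]; exact mul_le_mul_of_nonneg_left habs (by positivity)
    _ = 2 * ε / lam ^ 4 := by field_simp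

variable {u : E3} {δ : ℝ} {η : E3 → ℝ}

lemma aux_eta_zero_outside (hηs : Function.support η ⊆ Metric.closedBall 0 1) (hδ : 0 < δ)
    (v : E3) (hv : v ∉ Metric.closedBall u δ) : scaledTest η u δ v = 0 := by
  rw [Metric.mem_closedBall, dist_eq_norm, not_le] at hv
  exact aux_scaledTest_zero hηs hδ hv

lemma aux_integral_zero (hψ : LipschitzWith 1 ψ)
    (hψs : Function.support ψ ⊆ Metric.closedBall 0 1)
    (hε : 0 < ε) (hεlam : ε ≤ lam) (hδ : 0 < δ) (hδε : δ ≤ ε)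
    (hηs : Function.support η ⊆ Metric.closedBall 0 1)
    (hu : u ∉ Metric.closedBall x (6 * lam)) :
    (∫ v, PsiDiff ψ x lam ε v * scaledTest η u δ v) = 0 := by
  have hlam : 0 < lam := lt_of_lt_of_le hε hεlam
  rw [Metric.mem_closedBall, dist_eq_norm, not_le] at hu
  have : (fun v => PsiDiff ψ x lam ε v * scaledTest η u δ v) = fun _ => (0:ℝ) := by
    funext v
    by_cases hv : v ∈ Metric.closedBall u δ
    · have hvx : 5 * lam < ‖v - x‖ := by
        rw [Metric.mem_closedBall, dist_eq_norm] at hv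
        have h1 : ‖u - x‖ ≤ ‖v - u‖ + ‖v - x‖ := by
          calc ‖u - x‖ = ‖(u - v) + (v - x)‖ := by congr 1; abel
            _ ≤ ‖u - v‖ + ‖v - x‖ := norm_add_le _ _
            _ = ‖v - u‖ + ‖v - x‖ := by rw [norm_sub_rev]
        linarith
      have hψ1 : scaledTest ψ x lam v = 0 := aux_scaledTest_zero hψs hlam (by linarith)
      have hψ2 : (∫ z in gridCube ε (latticeOf ε v), scaledTest ψ x lam z) = 0 := by
        apply setIntegral_eq_zero_of_forall_eq_zero
        intro z hz
        have hdist : ‖z - v‖ ≤ 2 * ε :=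
          aux_norm_le_of_mem_gridCube hε hz (aux_mem_gridCube_latticeOf hε v)
        apply aux_scaledTest_zero hψs hlam
        have : ‖v - x‖ ≤ ‖z - v‖ + ‖z - x‖ := by
          calc ‖v - x‖ = ‖(v - z) + (z - x)‖ := by congr 1; abel
            _ ≤ ‖v - z‖ + ‖z - x‖ := norm_add_le _ _
            _ = ‖z - v‖ + ‖z - x‖ := by rw [norm_sub_rev]
        linarith
      rw [PsiDiff]
      simp only [hψ1, hψ2, mul_zero, sub_zero, zero_mul]
    · rw [aux_eta_zero_outside hηs hδ v hv, mul_zero]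
  rw [this, integral_zero]

lemma aux_integrable_prod (hψ : LipschitzWith 1 ψ)
    (hψs : Function.support ψ ⊆ Metric.closedBall 0 1) (hψb : ∀ z, |ψ z| ≤ 1)
    (hε : 0 < ε) (hεlam : ε ≤ lam) (hδ : 0 < δ)
    (hηm : Measurable η) (hηb : ∀ v, |η v| ≤ 1)
    (hηs : Function.support η ⊆ Metric.closedBall 0 1) :
    Integrable (fun v => PsiDiff ψ x lam ε v * scaledTest η u δ v) := by
  apply aux_integrable _ ((aux_measurable_psiDiff hψ x lam ε).mul
    (aux_scaledTest_measurable hηm u δ)) (u := u) (r := δ)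
    (C := (2 * ε / lam ^ 4) * (δ ^ 3)⁻¹)
  · intro v
    rw [Pi.mul_apply, abs_mul]
    exact mul_le_mul (aux_psiDiff_bound hψ hψs hψb hε hεlam v)
      (aux_scaledTest_bound hηb u hδ v) (abs_nonneg _) (by positivity)
  · intro v hv
    rw [Pi.mul_apply, aux_eta_zero_outside hηs hδ v hv, mul_zero]

lemma aux_integral_gen (hψ : LipschitzWith 1 ψ)
    (hψs : Function.support ψ ⊆ Metric.closedBall 0 1) (hψb : ∀ z, |ψ z| ≤ 1)
    (hε : 0 < ε) (hεlam : ε ≤ lam) (hδ : 0 < δ)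
    (hηm : Measurable η) (hηb : ∀ v, |η v| ≤ 1)
    (hηs : Function.support η ⊆ Metric.closedBall 0 1) :
    |∫ v, PsiDiff ψ x lam ε v * scaledTest η u δ v| ≤ 16 * ε / lam ^ 4 := by
  have h := aux_abs_integral_le (fun v => PsiDiff ψ x lam ε v * scaledTest η u δ v)
    ((aux_measurable_psiDiff hψ x lam ε).mul (aux_scaledTest_measurable hηm u δ))
    (u := u) (r := δ) (C := (2 * ε / lam ^ 4) * (δ ^ 3)⁻¹) hδ.le (by positivity)
    (fun v => by
      rw [abs_mul]
      exact mul_le_mul (aux_psiDiff_bound hψ hψs hψb hε hεlam v)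
        (aux_scaledTest_bound hηb u hδ v) (abs_nonneg _) (by positivity))
    (fun v hv => by rw [aux_eta_zero_outside hηs hδ v hv, mul_zero])
  calc |∫ v, PsiDiff ψ x lam ε v * scaledTest η u δ v|
      ≤ (2 * ε / lam ^ 4) * (δ ^ 3)⁻¹ * (8 * δ ^ 3) := h
    _ = (2 * ε / lam ^ 4) * ((δ ^ 3)⁻¹ * (8 * δ ^ 3)) := by ring
    _ = (2 * ε / lam ^ 4) * 8 := by
        rw [show (δ ^ 3)⁻¹ * (8 * δ ^ 3) = 8 from by field_simp]
    _ = 16 * ε / lam ^ 4 := by ring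

lemma aux_integral_interior (hψ : LipschitzWith 1 ψ)
    (hψs : Function.support ψ ⊆ Metric.closedBall 0 1) (hψb : ∀ z, |ψ z| ≤ 1)
    (hε : 0 < ε) (hεlam : ε ≤ lam) (hδ : 0 < δ)
    (hηm : Measurable η) (hηb : ∀ v, |η v| ≤ 1)
    (hηs : Function.support η ⊆ Metric.closedBall 0 1) (hη0 : (∫ v, η v) = 0)
    (hint : ∀ i, u i - latticeOf ε u i ∈ Ico (δ - ε / 2) (ε / 2 - δ)) :
    |∫ v, PsiDiff ψ x lam ε v * scaledTest η u δ v| ≤ 8 * δ / lam ^ 4 := by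
  have hlam : 0 < lam := lt_of_lt_of_le hε hεlam
  -- within closedBall u δ, the lattice point agrees with that of u
  have hlat : ∀ v ∈ Metric.closedBall u δ, latticeOf ε v = latticeOf ε u := by
    intro v hv
    apply aux_latticeOf_eq hε
    intro i
    have hi := hint i
    rw [mem_Ico] at hi ⊢
    have hc : |v i - u i| ≤ δ := by
      rw [Metric.mem_closedBall, dist_eq_norm] at hv
      have h3 : |(v - u) i| ≤ ‖v - u‖ := aux_coord_abs_le_norm (v - u) i
      have h4 : (v - u) i = v i - u i := rfl
      rw [h4] at h3; linarith
    rw [abs_le] at hc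
    constructor
    · have : v i - latticeOf ε u i = (v i - u i) + (u i - latticeOf ε u i) := by ring
      rw [this]; linarith [hi.1]
    · have : v i - latticeOf ε u i = (v i - u i) + (u i - latticeOf ε u i) := by ring
      rw [this]; linarith [hi.2]
  have hIprod : Integrable (fun v => PsiDiff ψ x lam ε v * scaledTest η u δ v) :=
    aux_integrable_prod hψ hψs hψb hε hεlam hδ hηm hηb hηs
  have hIeta : Integrable (scaledTest η u δ) := by
    apply aux_integrable _ (aux_scaledTest_measurable hηm u δ) (u := u) (r := δ)
      (aux_scaledTest_bound hηb u hδ)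
    exact fun v hv => aux_eta_zero_outside hηs hδ v hv
  have hIeta0 : (∫ v, scaledTest η u δ v) = 0 := by
    rw [aux_integral_scaledTest η u hδ, hη0]
  -- rewrite the integral
  have hsplit : (∫ v, PsiDiff ψ x lam ε v * scaledTest η u δ v)
      = ∫ v, (PsiDiff ψ x lam ε v - PsiDiff ψ x lam ε u) * scaledTest η u δ v := by
    have : (fun v => (PsiDiff ψ x lam ε v - PsiDiff ψ x lam ε u) * scaledTest η u δ v)
        = fun v => PsiDiff ψ x lam ε v * scaledTest η u δ v
          - PsiDiff ψ x lam ε u * scaledTest η u δ v := by funext v; ring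
    rw [this, integral_sub hIprod (hIeta.const_mul _), MeasureTheory.integral_const_mul, hIeta0,
      mul_zero, sub_zero]
  rw [hsplit]
  have h := aux_abs_integral_le
    (fun v => (PsiDiff ψ x lam ε v - PsiDiff ψ x lam ε u) * scaledTest η u δ v)
    (((aux_measurable_psiDiff hψ x lam ε).sub_const _).mul
      (aux_scaledTest_measurable hηm u δ))
    (u := u) (r := δ) (C := (δ / lam ^ 4) * (δ ^ 3)⁻¹) hδ.le (by positivity)
    (fun v => by
      by_cases hv : v ∈ Metric.closedBall u δ
      · have hlateq : latticeOf ε v = latticeOf ε u := hlat v hv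
        have hdiff : PsiDiff ψ x lam ε v - PsiDiff ψ x lam ε u
            = scaledTest ψ x lam v - scaledTest ψ x lam u := by
          simp only [PsiDiff, hlateq]; ring
        rw [abs_mul, hdiff]
        have h1 : |scaledTest ψ x lam v - scaledTest ψ x lam u| ≤ δ / lam ^ 4 := by
          refine (aux_scaledTest_lip hψ hlam v u).trans ?_
          gcongr
          rw [Metric.mem_closedBall, dist_eq_norm] at hv
          exact hv
        exact mul_le_mul h1 (aux_scaledTest_bound hηb u hδ v) (abs_nonneg _) (by positivity)
      · rw [aux_eta_zero_outside hηs hδ v hv, mul_zero, abs_zero]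
        positivity)
    (fun v hv => by rw [aux_eta_zero_outside hηs hδ v hv, mul_zero])
  calc |∫ v, (PsiDiff ψ x lam ε v - PsiDiff ψ x lam ε u) * scaledTest η u δ v|
      ≤ (δ / lam ^ 4) * (δ ^ 3)⁻¹ * (8 * δ ^ 3) := h
    _ = (δ / lam ^ 4) * ((δ ^ 3)⁻¹ * (8 * δ ^ 3)) := by ring
    _ = (δ / lam ^ 4) * 8 := by
        rw [show (δ ^ 3)⁻¹ * (8 * δ ^ 3) = 8 from by field_simp]
    _ = 8 * δ / lam ^ 4 := by ring

lemma aux_badset_vol {x : E3} (hε : 0 < ε) (hδ : 0 < δ) (hδε : δ ≤ ε) (hεlam : ε ≤ lam) :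
    volume ((⋃ i, (fun u : E3 => u i) ⁻¹' badTimes ε δ) ∩ Metric.closedBall x (6 * lam))
      ≤ ENNReal.ofReal (12960 * lam ^ 3 * δ / ε) := by
  have hlam : 0 < lam := lt_of_lt_of_le hε hεlam
  have hsub : (⋃ i, (fun u : E3 => u i) ⁻¹' badTimes ε δ) ∩ Metric.closedBall x (6 * lam)
      ⊆ ⋃ i, (((fun u : E3 => u i) ⁻¹' badTimes ε δ) ∩ Metric.closedBall x (6 * lam)) := by
    rintro u ⟨hu1, hu2⟩
    rw [mem_iUnion] at hu1 ⊢
    obtain ⟨i, hi⟩ := hu1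
    exact ⟨i, hi, hu2⟩
  have hterm : ∀ i : Fin 3,
      volume (((fun u : E3 => u i) ⁻¹' badTimes ε δ) ∩ Metric.closedBall x (6 * lam))
        ≤ ENNReal.ofReal (4320 * lam ^ 3 * δ / ε) := by
    intro i
    set A : Fin 3 → Set ℝ := fun j =>
      if j = i then badTimes ε δ ∩ Icc (x j - 6 * lam) (x j - 6 * lam + 12 * lam)
      else Icc (x j - 6 * lam) (x j - 6 * lam + 12 * lam) with hA
    have hbox : ∀ u ∈ Metric.closedBall x (6 * lam), ∀ j : Fin 3,
        u j ∈ Icc (x j - 6 * lam) (x j - 6 * lam + 12 * lam) := by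
      intro u hu j
      have := aux_closedBall_subset_box x (6 * lam) hu j
      rw [mem_Icc] at this ⊢
      constructor <;> linarith [this.1, this.2]
    have hsub2 : ((fun u : E3 => u i) ⁻¹' badTimes ε δ) ∩ Metric.closedBall x (6 * lam)
        ⊆ {z : E3 | ∀ j, z j ∈ A j} := by
      rintro u ⟨hu1, hu2⟩ j
      simp only [hA]
      by_cases hj : j = i
      · rw [if_pos hj]; subst hj; exact ⟨hu1, hbox u hu2 j⟩
      · rw [if_neg hj]; exact hbox u hu2 j
    have hAm : ∀ j, MeasurableSet (A j) := by
      intro j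
      simp only [hA]
      by_cases hj : j = i
      · rw [if_pos hj]; exact (aux_badTimes_meas ε δ).inter measurableSet_Icc
      · rw [if_neg hj]; exact measurableSet_Icc
    refine (measure_mono hsub2).trans ?_
    rw [aux_volume_pi_set A hAm]
    have hfac : ∀ j, volume (A j) ≤
        (if j = i then ENNReal.ofReal (30 * lam * δ / ε) else ENNReal.ofReal (12 * lam)) := by
      intro j
      simp only [hA]
      by_cases hj : j = i
      · rw [if_pos hj, if_pos hj]
        exact aux_badTimes_vol hε hδ hδε hεlam (x j - 6 * lam)
      · rw [if_neg hj, if_neg hj, Real.volume_Icc]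
        apply le_of_eq; congr 1; ring
    refine (Finset.prod_le_prod' fun j _ => hfac j).trans ?_
    have hprod : (∏ j : Fin 3, (if j = i then ENNReal.ofReal (30 * lam * δ / ε)
        else ENNReal.ofReal (12 * lam)))
        = ENNReal.ofReal (30 * lam * δ / ε) * ENNReal.ofReal (12 * lam) ^ 2 := by
      rw [← Finset.mul_prod_erase Finset.univ _ (Finset.mem_univ i), if_pos rfl]
      congr 1
      rw [Finset.prod_congr rfl (fun j hj => if_neg (Finset.ne_of_mem_erase hj)),
        Finset.prod_const, Finset.card_erase_of_mem (Finset.mem_univ i),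
        Finset.card_univ, Fintype.card_fin]
    rw [hprod, ← ENNReal.ofReal_pow (by positivity), ← ENNReal.ofReal_mul (by positivity)]
    apply ENNReal.ofReal_le_ofReal
    apply le_of_eq
    field_simp
    ring
  refine (measure_mono hsub).trans ((measure_iUnion_le _).trans ?_)
  rw [tsum_fintype]
  calc ∑ i : Fin 3, volume (((fun u : E3 => u i) ⁻¹' badTimes ε δ)
        ∩ Metric.closedBall x (6 * lam))
      ≤ ∑ _i : Fin 3, ENNReal.ofReal (4320 * lam ^ 3 * δ / ε) :=
        Finset.sum_le_sum fun i _ => hterm i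
    _ = 3 * ENNReal.ofReal (4320 * lam ^ 3 * δ / ε) := by
        rw [Finset.sum_const, Finset.card_univ, Fintype.card_fin, nsmul_eq_mul]; norm_num
    _ = ENNReal.ofReal (12960 * lam ^ 3 * δ / ε) := by
        rw [show (3 : ℝ≥0∞) = ENNReal.ofReal 3 from by norm_num,
          ← ENNReal.ofReal_mul (by norm_num)]
        congr 1; ring
end main


/-- Small-scale regime (`δ ≤ ε`) of the Besov `B^{1/2+κ̄}_{1,1}` bound on
`Ψ_ε^λ`: testing against mean-zero rescaled test functions `η_u^δ` at scales `δ ≤ ε` yields a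
total contribution of order `ε^{1/2-κ̄} λ⁻¹`. -/
theorem besov_bound_small_scales :
    ∀ κb : ℝ, κb ∈ Ioo (0 : ℝ) (1 / 2) →
      ∃ C : ℝ, 0 < C ∧
        ∀ (x : EuclideanSpace ℝ (Fin 3)) (ε lam : ℝ), 0 < ε → ε ≤ lam → lam ≤ 1 →
          ∀ ψ : EuclideanSpace ℝ (Fin 3) → ℝ,
            LipschitzWith 1 ψ → (∀ z, |ψ z| ≤ 1) →
            Function.support ψ ⊆ Metric.closedBall 0 1 →
            (∫⁻ δ in Ioc (0 : ℝ) ε, ∫⁻ u : EuclideanSpace ℝ (Fin 3),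
                ENNReal.ofReal (δ ^ (-(3 : ℝ) / 2 - κb) *
                  ⨆ η ∈ testSetZero, |∫ v, PsiDiff ψ x lam ε v * scaledTest η u δ v|))
              ≤ ENNReal.ofReal (C * ε ^ ((1 : ℝ) / 2 - κb) * lam⁻¹) := by
  intro κb hκ
  obtain ⟨hκ0, hκ2⟩ := hκ
  have hq : (0:ℝ) < 1 / 2 - κb := by linarith
  refine ⟨221184 / (1 / 2 - κb), by positivity, ?_⟩
  intro x ε lam hε hεlam hlam1 ψ hψlip hψb hψs
  have hlam : 0 < lam := lt_of_lt_of_le hε hεlam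
  set p : ℝ := -(3:ℝ) / 2 - κb with hp
  set q : ℝ := -(1:ℝ) / 2 - κb with hq'
  -- the supremum
  set Sup : ℝ → E3 → ℝ := fun δ u =>
    ⨆ η ∈ testSetZero, |∫ v, PsiDiff ψ x lam ε v * scaledTest η u δ v| with hSup
  -- step 1 : inner integral bound for each δ ∈ Ioc 0 ε
  have step1 : ∀ δ ∈ Ioc (0:ℝ) ε,
      (∫⁻ u : E3, ENNReal.ofReal (δ ^ p * Sup δ u))
        ≤ ENNReal.ofReal (221184 / lam) * ENNReal.ofReal (δ ^ q) := by
    intro δ hδmem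
    obtain ⟨hδ, hδε⟩ := hδmem
    set Bad : Set E3 := (⋃ i, (fun u : E3 => u i) ⁻¹' badTimes ε δ) with hBad
    have hBadm : MeasurableSet Bad :=
      MeasurableSet.iUnion fun i =>
        (by fun_prop : Measurable fun u : E3 => u i) (aux_badTimes_meas ε δ)
    have hBallm : MeasurableSet (Metric.closedBall x (6 * lam)) :=
      measurableSet_closedBall
    -- pointwise bound on the sup
    have hpoint : ∀ u : E3, ENNReal.ofReal (Sup δ u) ≤
        (Metric.closedBall x (6 * lam)).indicator
            (fun _ => ENNReal.ofReal (8 * δ / lam ^ 4)) u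
        + (Bad ∩ Metric.closedBall x (6 * lam)).indicator
            (fun _ => ENNReal.ofReal (16 * ε / lam ^ 4)) u := by
      intro u
      by_cases hu : u ∈ Metric.closedBall x (6 * lam)
      · by_cases hb : u ∈ Bad
        · have hgen : Sup δ u ≤ 16 * ε / lam ^ 4 := by
            refine Real.iSup_le (fun η => Real.iSup_le (fun hη => ?_) (by positivity))
              (by positivity)
            exact aux_integral_gen hψlip hψs hψb hε hεlam hδ hη.1.1 hη.1.2.1 hη.1.2.2
          calc ENNReal.ofReal (Sup δ u) ≤ ENNReal.ofReal (16 * ε / lam ^ 4) :=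
                ENNReal.ofReal_le_ofReal hgen
            _ = (Bad ∩ Metric.closedBall x (6 * lam)).indicator
                (fun _ => ENNReal.ofReal (16 * ε / lam ^ 4)) u := by
                rw [Set.indicator_of_mem (Set.mem_inter hb hu)]
            _ ≤ _ := le_add_self
        · have hint : ∀ i, u i - latticeOf ε u i ∈ Ico (δ - ε / 2) (ε / 2 - δ) := by
            intro i
            rw [hBad, mem_iUnion] at hb
            push_neg at hb
            have := hb i
            rw [mem_preimage] at this
            have h2 : u i - ε * (⌊u i / ε + 1 / 2⌋ : ℤ) ∈ Ico (δ - ε / 2) (ε / 2 - δ) := by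
              by_contra hcon
              exact this hcon
            exact h2
          have hii : Sup δ u ≤ 8 * δ / lam ^ 4 := by
            refine Real.iSup_le (fun η => Real.iSup_le (fun hη => ?_) (by positivity))
              (by positivity)
            exact aux_integral_interior hψlip hψs hψb hε hεlam hδ
              hη.1.1 hη.1.2.1 hη.1.2.2 hη.2 hint
          calc ENNReal.ofReal (Sup δ u) ≤ ENNReal.ofReal (8 * δ / lam ^ 4) :=
                ENNReal.ofReal_le_ofReal hii
            _ = (Metric.closedBall x (6 * lam)).indicator
                (fun _ => ENNReal.ofReal (8 * δ / lam ^ 4)) u := by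
                rw [Set.indicator_of_mem hu]
            _ ≤ _ := self_le_add_right _ _
      · have h0 : Sup δ u ≤ 0 := by
          refine Real.iSup_le (fun η => Real.iSup_le (fun hη => ?_) le_rfl) le_rfl
          rw [aux_integral_zero hψlip hψs hε hεlam hδ hδε hη.1.2.2 hu, abs_zero]
        calc ENNReal.ofReal (Sup δ u) ≤ ENNReal.ofReal 0 := ENNReal.ofReal_le_ofReal h0
          _ = 0 := ENNReal.ofReal_zero
          _ ≤ _ := zero_le
    calc (∫⁻ u : E3, ENNReal.ofReal (δ ^ p * Sup δ u))
        = ∫⁻ u : E3, ENNReal.ofReal (δ ^ p) * ENNReal.ofReal (Sup δ u) := by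
          congr 1; funext u
          rw [← ENNReal.ofReal_mul (Real.rpow_nonneg hδ.le p)]
      _ = ENNReal.ofReal (δ ^ p) * ∫⁻ u : E3, ENNReal.ofReal (Sup δ u) :=
          lintegral_const_mul' _ _ ENNReal.ofReal_ne_top
      _ ≤ ENNReal.ofReal (δ ^ p) * (ENNReal.ofReal (8 * δ / lam ^ 4)
            * volume (Metric.closedBall x (6 * lam))
          + ENNReal.ofReal (16 * ε / lam ^ 4)
            * volume (Bad ∩ Metric.closedBall x (6 * lam))) := by
          apply mul_le_mul_right
          calc (∫⁻ u : E3, ENNReal.ofReal (Sup δ u))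
              ≤ ∫⁻ u : E3, ((Metric.closedBall x (6 * lam)).indicator
                  (fun _ => ENNReal.ofReal (8 * δ / lam ^ 4)) u
                + (Bad ∩ Metric.closedBall x (6 * lam)).indicator
                  (fun _ => ENNReal.ofReal (16 * ε / lam ^ 4)) u) :=
                lintegral_mono hpoint
            _ = (∫⁻ u : E3, (Metric.closedBall x (6 * lam)).indicator
                  (fun _ => ENNReal.ofReal (8 * δ / lam ^ 4)) u)
                + ∫⁻ u : E3, (Bad ∩ Metric.closedBall x (6 * lam)).indicator
                  (fun _ => ENNReal.ofReal (16 * ε / lam ^ 4)) u :=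
                lintegral_add_left (measurable_const.indicator hBallm) _
            _ = ENNReal.ofReal (8 * δ / lam ^ 4) * volume (Metric.closedBall x (6 * lam))
                + ENNReal.ofReal (16 * ε / lam ^ 4)
                  * volume (Bad ∩ Metric.closedBall x (6 * lam)) := by
                rw [lintegral_indicator hBallm, lintegral_indicator (hBadm.inter hBallm),
                  setLIntegral_const, setLIntegral_const]
      _ ≤ ENNReal.ofReal (δ ^ p) * (ENNReal.ofReal (8 * δ / lam ^ 4)
            * ENNReal.ofReal (1728 * lam ^ 3)
          + ENNReal.ofReal (16 * ε / lam ^ 4)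
            * ENNReal.ofReal (12960 * lam ^ 3 * δ / ε)) := by
          apply mul_le_mul_right
          apply add_le_add
          · apply mul_le_mul_right
            calc volume (Metric.closedBall x (6 * lam))
                ≤ volume {z : E3 | ∀ i, z i ∈ Icc (x i - 6 * lam) (x i + 6 * lam)} :=
                  measure_mono (aux_closedBall_subset_box x (6 * lam))
              _ = ENNReal.ofReal ((2 * (6 * lam)) ^ 3) := aux_volume_box x (by positivity)
              _ = ENNReal.ofReal (1728 * lam ^ 3) := by congr 1; ring
          · exact mul_le_mul_right (aux_badset_vol hε hδ hδε hεlam) _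
      _ ≤ ENNReal.ofReal (δ ^ p) * ENNReal.ofReal (221184 * δ / lam) := by
          apply mul_le_mul_right
          rw [← ENNReal.ofReal_mul (by positivity), ← ENNReal.ofReal_mul (by positivity),
            ← ENNReal.ofReal_add (by positivity) (by positivity)]
          apply ENNReal.ofReal_le_ofReal
          have e1 : 8 * δ / lam ^ 4 * (1728 * lam ^ 3) = 13824 * δ / lam := by
            field_simp; ring
          have e2 : 16 * ε / lam ^ 4 * (12960 * lam ^ 3 * δ / ε) = 207360 * δ / lam := by
            field_simp; ring
          rw [e1, e2]
          apply le_of_eq; field_simp; ring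
      _ = ENNReal.ofReal (221184 / lam) * ENNReal.ofReal (δ ^ q) := by
          rw [← ENNReal.ofReal_mul (Real.rpow_nonneg hδ.le p),
            ← ENNReal.ofReal_mul (by positivity)]
          congr 1
          have : δ ^ q = δ ^ p * δ := by
            rw [← Real.rpow_add_one (ne_of_gt hδ) p]
            congr 1
            rw [hp, hq']; ring
          rw [this]; field_simp
  -- step 2 : integrate in δ
  calc (∫⁻ δ in Ioc (0 : ℝ) ε, ∫⁻ u : E3, ENNReal.ofReal (δ ^ p * Sup δ u))
      ≤ ∫⁻ δ in Ioc (0 : ℝ) ε, ENNReal.ofReal (221184 / lam) * ENNReal.ofReal (δ ^ q) := by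
        refine setLIntegral_mono (by fun_prop) step1
    _ = ENNReal.ofReal (221184 / lam) * ∫⁻ δ in Ioc (0 : ℝ) ε, ENNReal.ofReal (δ ^ q) :=
        lintegral_const_mul' _ _ ENNReal.ofReal_ne_top
    _ = ENNReal.ofReal (221184 / lam) * ENNReal.ofReal (ε ^ (1/2 - κb) / (1/2 - κb)) := by
        congr 1
        have hInt : IntegrableOn (fun δ : ℝ => δ ^ q) (Ioc (0:ℝ) ε) := by
          have := intervalIntegral.intervalIntegrable_rpow' (a := 0) (b := ε)
            (by rw [hq']; linarith : (-1:ℝ) < q)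
          rwa [intervalIntegrable_iff, uIoc_of_le hε.le] at this
        rw [← ofReal_integral_eq_lintegral_ofReal hInt]
        · congr 1
          have h1 : (∫ δ in Ioc (0:ℝ) ε, δ ^ q) = ∫ δ in (0:ℝ)..ε, δ ^ q := by
            rw [intervalIntegral.integral_of_le hε.le]
          rw [h1, integral_rpow (Or.inl (by rw [hq']; linarith : (-1:ℝ) < q))]
          rw [Real.zero_rpow (by rw [hq']; intro h; linarith [hq] : q + 1 ≠ 0)]
          rw [show q + 1 = 1/2 - κb from by rw [hq']; ring]
          ring
        · filter_upwards [ae_restrict_mem measurableSet_Ioc] with δ hδ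
          exact Real.rpow_nonneg hδ.1.le q
    _ = ENNReal.ofReal (221184 / (1 / 2 - κb) * ε ^ ((1:ℝ) / 2 - κb) * lam⁻¹) := by
        rw [← ENNReal.ofReal_mul (by positivity)]
        congr 1
        field_simp

end
end

section
/- For every κ ∈ (0, 1/2) and every κ̄ ∈ (0, κ/2) there exists a constant C > 0 such that for every x ∈ ℝ³, all 0 < ε ≤ λ ≤ 1 and every ψ : ℝ³ → ℝ which is Lipschitz with Lipschitz constant at most 1, satisfies ‖ψ‖_∞ ≤ 1 and has support in the closed unit ball, one has ∫_ε^λ ∫_{ℝ³} δ^{-3/2-κ̄} ( sup_{η ∈ 𝒩} | ∫_{ℝ³} Ψ_ε^λ(v) η_u^δ(v) dv | ) du dδ ≤ C λ^{-1/2-κ} ε^{κ−κ̄}. -/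
open MeasureTheory Set

lemma latticeOf_apply (ε : ℝ) (v : EuclideanSpace ℝ (Fin 3)) (i : Fin 3) :
    latticeOf ε v i = ε * (⌊v i / ε + 1 / 2⌋ : ℤ) := rfl

lemma mem_gridCube_latticeOf {ε : ℝ} (hε : 0 < ε) (v : EuclideanSpace ℝ (Fin 3)) :
    v ∈ gridCube ε (latticeOf ε v) := by
  intro i
  rw [latticeOf_apply]
  set t := v i / ε with ht
  have hv : v i = ε * t := by rw [ht]; field_simp
  have h1 : (⌊t + 1/2⌋ : ℝ) ≤ t + 1/2 := Int.floor_le _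
  have h2 : t + 1/2 < ⌊t + 1/2⌋ + 1 := Int.lt_floor_add_one _
  constructor
  · rw [hv]; nlinarith
  · rw [hv]; nlinarith

lemma gridCube_eq_preimage (ε : ℝ) (y : EuclideanSpace ℝ (Fin 3)) :
    gridCube ε y = (MeasurableEquiv.toLp 2 (Fin 3 → ℝ)).symm ⁻¹'
      (univ.pi fun i => Ico (y i - ε / 2) (y i + ε / 2)) := by
  ext z
  simp only [gridCube, mem_setOf_eq, mem_preimage, mem_pi, mem_univ, forall_true_left,
    mem_Ico, true_implies]
  refine forall_congr' fun i => ?_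
  have : (MeasurableEquiv.toLp 2 (Fin 3 → ℝ)).symm z i = z i := rfl
  rw [this]
  constructor <;> intro h <;> constructor <;> linarith [h.1, h.2]

lemma measurableSet_gridCube (ε : ℝ) (y : EuclideanSpace ℝ (Fin 3)) :
    MeasurableSet (gridCube ε y) := by
  rw [gridCube_eq_preimage]
  exact (MeasurableEquiv.measurable _) (MeasurableSet.univ_pi fun i => measurableSet_Ico)

lemma volume_gridCube {ε : ℝ} (hε : 0 ≤ ε) (y : EuclideanSpace ℝ (Fin 3)) :
    volume (gridCube ε y) = ENNReal.ofReal (ε ^ 3) := by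
  rw [gridCube_eq_preimage,
    (EuclideanSpace.volume_preserving_symm_measurableEquiv_toLp (Fin 3)).measure_preimage
      ((MeasurableSet.univ_pi fun i => measurableSet_Ico).nullMeasurableSet),
    volume_pi_pi]
  simp only [Real.volume_Ico, show ∀ a : ℝ, a + ε/2 - (a - ε/2) = ε from fun a => by ring]
  rw [Finset.prod_const, ← ENNReal.ofReal_pow hε]
  norm_num

lemma dist_le_of_mem_gridCube {ε : ℝ} {y z v : EuclideanSpace ℝ (Fin 3)}
    (hz : z ∈ gridCube ε y) (hv : v ∈ gridCube ε y) : dist z v ≤ Real.sqrt 3 * ε := by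
  have hε : 0 ≤ ε := by
    have := (hz 0).1; have := (hz 0).2; linarith [(hz 0).1, (hz 0).2]
  rw [EuclideanSpace.dist_eq]
  have hb : ∀ i : Fin 3, dist (z i) (v i) ^ 2 ≤ ε ^ 2 := by
    intro i
    have h1 := hz i; have h2 := hv i
    rw [Real.dist_eq]
    have : |z i - v i| ≤ ε := by
      rw [abs_le]; constructor <;> [linarith [h1.1, h2.2]; linarith [h1.2, h2.1]]
    have h3 := abs_nonneg (z i - v i); nlinarith [sq_abs (z i - v i)]
  have hsum : (∑ i : Fin 3, dist (z i) (v i) ^ 2) ≤ 3 * ε ^ 2 := by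
    calc (∑ i : Fin 3, dist (z i) (v i) ^ 2) ≤ ∑ i : Fin 3, ε ^ 2 :=
          Finset.sum_le_sum fun i _ => hb i
      _ = 3 * ε ^ 2 := by norm_num
  calc Real.sqrt (∑ i : Fin 3, dist (z i) (v i) ^ 2) ≤ Real.sqrt (3 * ε ^ 2) :=
        Real.sqrt_le_sqrt hsum
    _ = Real.sqrt 3 * ε := by
        rw [Real.sqrt_mul (by norm_num), Real.sqrt_sq hε]

lemma continuous_scaledTest {ψ : EuclideanSpace ℝ (Fin 3) → ℝ}
    (hψ : LipschitzWith 1 ψ) (x : EuclideanSpace ℝ (Fin 3)) (lam : ℝ) :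
    Continuous (scaledTest ψ x lam) :=
  continuous_const.mul (hψ.continuous.comp
    ((continuous_id.sub continuous_const).const_smul lam⁻¹))

lemma abs_scaledTest_le {f : EuclideanSpace ℝ (Fin 3) → ℝ} {lam : ℝ} (hlam : 0 < lam)
    (hb : ∀ z, |f z| ≤ 1) (x z : EuclideanSpace ℝ (Fin 3)) :
    |scaledTest f x lam z| ≤ (lam ^ 3)⁻¹ := by
  have h1 : (0:ℝ) < (lam ^ 3)⁻¹ := by positivity
  calc |scaledTest f x lam z| = (lam ^ 3)⁻¹ * |f (lam⁻¹ • (z - x))| := by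
        rw [scaledTest, abs_mul, abs_of_pos h1]
    _ ≤ (lam ^ 3)⁻¹ * 1 := by
        exact mul_le_mul_of_nonneg_left (hb _) h1.le
    _ = (lam ^ 3)⁻¹ := mul_one _

lemma scaledTest_eq_zero {f : EuclideanSpace ℝ (Fin 3) → ℝ} {lam : ℝ} (hlam : 0 < lam)
    (hsupp : Function.support f ⊆ Metric.closedBall 0 1) {x z : EuclideanSpace ℝ (Fin 3)}
    (h : lam < dist z x) : scaledTest f x lam z = 0 := by
  rw [scaledTest]
  convert mul_zero _
  by_contra hne
  have hmem := hsupp hne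
  rw [Metric.mem_closedBall, dist_zero_right, norm_smul, norm_inv, Real.norm_eq_abs,
    abs_of_pos hlam] at hmem
  rw [dist_eq_norm] at h
  have : ‖z - x‖ ≤ lam := by
    rw [inv_mul_le_iff₀ hlam, mul_one] at hmem
    exact hmem
  linarith

lemma abs_scaledTest_sub {ψ : EuclideanSpace ℝ (Fin 3) → ℝ} {lam : ℝ} (hlam : 0 < lam)
    (hψ : LipschitzWith 1 ψ) (x a b : EuclideanSpace ℝ (Fin 3)) :
    |scaledTest ψ x lam a - scaledTest ψ x lam b| ≤ (lam ^ 4)⁻¹ * dist a b := by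
  have h1 : (0:ℝ) < (lam ^ 3)⁻¹ := by positivity
  have hd : dist (ψ (lam⁻¹ • (a - x))) (ψ (lam⁻¹ • (b - x))) ≤ lam⁻¹ * dist a b := by
    calc dist (ψ (lam⁻¹ • (a - x))) (ψ (lam⁻¹ • (b - x)))
        ≤ 1 * dist (lam⁻¹ • (a - x)) (lam⁻¹ • (b - x)) := hψ.dist_le_mul _ _
      _ = lam⁻¹ * dist a b := by
          rw [one_mul, dist_eq_norm, ← smul_sub, norm_smul, norm_inv, Real.norm_eq_abs,
            abs_of_pos hlam]
          congr 1
          rw [dist_eq_norm]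
          congr 1
          abel
  calc |scaledTest ψ x lam a - scaledTest ψ x lam b|
      = (lam ^ 3)⁻¹ * |ψ (lam⁻¹ • (a - x)) - ψ (lam⁻¹ • (b - x))| := by
        simp only [scaledTest]
        rw [← mul_sub, abs_mul, abs_of_pos h1]
    _ ≤ (lam ^ 3)⁻¹ * (lam⁻¹ * dist a b) := by
        refine mul_le_mul_of_nonneg_left ?_ h1.le
        rw [← Real.dist_eq]; exact hd
    _ = (lam ^ 4)⁻¹ * dist a b := by
        rw [← mul_assoc]
        congr 1
        field_simp

lemma integrableOn_scaledTest {ψ : EuclideanSpace ℝ (Fin 3) → ℝ} {lam ε : ℝ} (hε : 0 < ε)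
    (hlam : 0 < lam) (hψ : LipschitzWith 1 ψ) (hb : ∀ z, |ψ z| ≤ 1)
    (x y : EuclideanSpace ℝ (Fin 3)) :
    IntegrableOn (scaledTest ψ x lam) (gridCube ε y) volume := by
  refine Measure.integrableOn_of_bounded (M := (lam ^ 3)⁻¹) ?_
    ((continuous_scaledTest hψ x lam).aestronglyMeasurable) ?_
  · rw [volume_gridCube hε.le]; exact ENNReal.ofReal_ne_top
  · exact Filter.Eventually.of_forall fun z => abs_scaledTest_le hlam hb x z

lemma abs_PsiDiff_le {ψ : EuclideanSpace ℝ (Fin 3) → ℝ} {lam ε : ℝ} (hε : 0 < ε)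
    (hlam : 0 < lam) (hψ : LipschitzWith 1 ψ) (hb : ∀ z, |ψ z| ≤ 1)
    (x v : EuclideanSpace ℝ (Fin 3)) :
    |PsiDiff ψ x lam ε v| ≤ Real.sqrt 3 * ε * (lam ^ 4)⁻¹ := by
  set y := latticeOf ε v with hy
  set s := gridCube ε y with hs
  set f := scaledTest ψ x lam with hf
  have hvols : volume s = ENNReal.ofReal (ε ^ 3) := volume_gridCube hε.le y
  have hfin : volume s < ⊤ := by rw [hvols]; exact ENNReal.ofReal_lt_top
  have hconst : ∫ _ in s, f v ∂volume = ε ^ 3 * f v := by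
    rw [setIntegral_const, measureReal_def, hvols, ENNReal.toReal_ofReal (by positivity), smul_eq_mul]
  have hint : IntegrableOn f s volume := integrableOn_scaledTest hε hlam hψ hb x y
  have hconst_int : IntegrableOn (fun _ => f v) s volume := integrableOn_const hfin.ne
  have hPsi : PsiDiff ψ x lam ε v = (ε ^ 3)⁻¹ * ∫ z in s, (f v - f z) ∂volume := by
    rw [integral_sub hconst_int hint, hconst]
    rw [PsiDiff]
    rw [mul_sub]
    congr 1
    rw [← mul_assoc, inv_mul_cancel₀ (by positivity), one_mul]
  have hbound : ‖∫ z in s, (f v - f z) ∂volume‖ ≤ (lam ^ 4)⁻¹ * (Real.sqrt 3 * ε) * (volume s).toReal := by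
    refine norm_setIntegral_le_of_norm_le_const hfin ?_
    · intro z hz
      rw [Real.norm_eq_abs, abs_sub_comm]
      calc |f z - f v| ≤ (lam ^ 4)⁻¹ * dist z v := abs_scaledTest_sub hlam hψ x z v
        _ ≤ (lam ^ 4)⁻¹ * (Real.sqrt 3 * ε) := by
            refine mul_le_mul_of_nonneg_left ?_ (by positivity)
            exact dist_le_of_mem_gridCube hz (mem_gridCube_latticeOf hε v)
  rw [hPsi, abs_mul, abs_of_pos (show (0:ℝ) < (ε ^ 3)⁻¹ by positivity)]
  rw [hvols, ENNReal.toReal_ofReal (by positivity : (0:ℝ) ≤ ε ^ 3)] at hbound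
  rw [← Real.norm_eq_abs]
  calc (ε ^ 3)⁻¹ * ‖∫ z in s, (f v - f z) ∂volume‖
      ≤ (ε ^ 3)⁻¹ * ((lam ^ 4)⁻¹ * (Real.sqrt 3 * ε) * ε ^ 3) :=
        mul_le_mul_of_nonneg_left hbound (by positivity)
    _ = Real.sqrt 3 * ε * (lam ^ 4)⁻¹ := by field_simp

lemma PsiDiff_eq_zero {ψ : EuclideanSpace ℝ (Fin 3) → ℝ} {lam ε : ℝ} (hε : 0 < ε)
    (hlam : 0 < lam) (hsupp : Function.support ψ ⊆ Metric.closedBall 0 1)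
    {x v : EuclideanSpace ℝ (Fin 3)} (h : lam + Real.sqrt 3 * ε < dist v x) :
    PsiDiff ψ x lam ε v = 0 := by
  have hs3 : (0:ℝ) ≤ Real.sqrt 3 * ε := by positivity
  have h1 : scaledTest ψ x lam v = 0 :=
    scaledTest_eq_zero hlam hsupp (by linarith)
  have h2 : ∫ z in gridCube ε (latticeOf ε v), scaledTest ψ x lam z ∂volume = 0 := by
    refine setIntegral_eq_zero_of_forall_eq_zero fun z hz => ?_
    refine scaledTest_eq_zero hlam hsupp ?_
    have hd : dist z v ≤ Real.sqrt 3 * ε :=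
      dist_le_of_mem_gridCube hz (mem_gridCube_latticeOf hε v)
    have := dist_triangle v z x
    have hzx : dist v x - dist v z ≤ dist z x := by linarith
    rw [dist_comm v z] at hzx
    linarith
  rw [PsiDiff, h1, h2, mul_zero, sub_zero]

lemma lintegral_rpow_Ioc_le {ε lam p : ℝ} (hε : 0 < ε) (hεlam : ε ≤ lam) (hp : p < -1) :
    ∫⁻ δ in Ioc ε lam, ENNReal.ofReal (δ ^ p) ≤ ENNReal.ofReal (ε ^ (p + 1) / (-(p + 1))) := by
  have h0 : (0:ℝ) ∉ uIcc ε lam := notMem_uIcc_of_lt hε (hε.trans_le hεlam)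
  have hii : IntervalIntegrable (fun δ : ℝ => δ ^ p) volume ε lam :=
    intervalIntegral.intervalIntegrable_rpow (Or.inr h0)
  have hIoc : IntegrableOn (fun δ : ℝ => δ ^ p) (Ioc ε lam) volume :=
    (intervalIntegrable_iff_integrableOn_Ioc_of_le hεlam).mp hii
  have hnn : 0 ≤ᵐ[volume.restrict (Ioc ε lam)] fun δ : ℝ => δ ^ p :=
    (ae_restrict_iff' measurableSet_Ioc).mpr
      (Filter.Eventually.of_forall fun δ hδ => Real.rpow_nonneg (hε.trans hδ.1).le p)
  rw [← ofReal_integral_eq_lintegral_ofReal hIoc hnn]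
  apply ENNReal.ofReal_le_ofReal
  have hval : ∫ δ in Ioc ε lam, δ ^ p = (lam ^ (p + 1) - ε ^ (p + 1)) / (p + 1) := by
    rw [← intervalIntegral.integral_of_le hεlam]
    exact integral_rpow (Or.inr ⟨by linarith, h0⟩)
  rw [hval]
  have h1 : 0 ≤ lam ^ (p + 1) := Real.rpow_nonneg (hε.trans_le hεlam).le _
  have h2 : (0:ℝ) < -(p + 1) := by linarith
  have heq : (lam ^ (p + 1) - ε ^ (p + 1)) / (p + 1)
      = (ε ^ (p + 1) - lam ^ (p + 1)) / (-(p + 1)) := by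
    rw [div_eq_div_iff (by linarith) (by linarith)]
    ring
  rw [heq]
  gcongr
  linarith

lemma key_integral_bound {ψ η : EuclideanSpace ℝ (Fin 3) → ℝ} {lam ε δ : ℝ}
    (hε : 0 < ε) (hlam : 0 < lam) (hδ : 0 < δ)
    (hψ : LipschitzWith 1 ψ) (hb : ∀ z, |ψ z| ≤ 1) (hη : η ∈ testSet)
    (x u : EuclideanSpace ℝ (Fin 3)) :
    |∫ v, PsiDiff ψ x lam ε v * scaledTest η u δ v| ≤
      Real.sqrt 3 * ε * (lam ^ 4)⁻¹ *
        (volume (Metric.ball (0 : EuclideanSpace ℝ (Fin 3)) 1)).toReal := by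
  set B : ℝ := Real.sqrt 3 * ε * (lam ^ 4)⁻¹ with hB
  have hBnn : 0 ≤ B := by positivity
  set V : ENNReal := volume (Metric.ball (0 : EuclideanSpace ℝ (Fin 3)) 1) with hV
  have hptwise : ∀ v, ENNReal.ofReal ‖PsiDiff ψ x lam ε v * scaledTest η u δ v‖ ≤
      (Metric.closedBall u δ).indicator (fun _ => ENNReal.ofReal (B * (δ ^ 3)⁻¹)) v := by
    intro v
    by_cases hv : v ∈ Metric.closedBall u δ
    · rw [indicator_of_mem hv]
      apply ENNReal.ofReal_le_ofReal
      rw [Real.norm_eq_abs, abs_mul]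
      calc |PsiDiff ψ x lam ε v| * |scaledTest η u δ v| ≤ B * (δ ^ 3)⁻¹ := by
            refine mul_le_mul (abs_PsiDiff_le hε hlam hψ hb x v)
              (abs_scaledTest_le hδ hη.2.1 u v) (abs_nonneg _) hBnn
        _ = B * (δ ^ 3)⁻¹ := rfl
    · rw [indicator_of_notMem hv]
      have : scaledTest η u δ v = 0 := by
        refine scaledTest_eq_zero hδ hη.2.2 ?_
        rw [Metric.mem_closedBall] at hv
        push_neg at hv
        exact hv
      simp [this]
  calc |∫ v, PsiDiff ψ x lam ε v * scaledTest η u δ v|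
      ≤ (∫⁻ v, ENNReal.ofReal ‖PsiDiff ψ x lam ε v * scaledTest η u δ v‖).toReal := by
        rw [← Real.norm_eq_abs]
        exact norm_integral_le_lintegral_norm _
    _ ≤ ((ENNReal.ofReal (B * (δ ^ 3)⁻¹)) * volume (Metric.closedBall u δ)).toReal := by
        refine ENNReal.toReal_mono ?_ ?_
        · exact ENNReal.mul_ne_top ENNReal.ofReal_ne_top measure_closedBall_lt_top.ne
        · calc (∫⁻ v, ENNReal.ofReal ‖PsiDiff ψ x lam ε v * scaledTest η u δ v‖)
              ≤ ∫⁻ v, (Metric.closedBall u δ).indicator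
                  (fun _ => ENNReal.ofReal (B * (δ ^ 3)⁻¹)) v := lintegral_mono hptwise
            _ = ENNReal.ofReal (B * (δ ^ 3)⁻¹) * volume (Metric.closedBall u δ) :=
                lintegral_indicator_const measurableSet_closedBall _
    _ ≤ B * V.toReal := by
        rw [Measure.addHaar_closedBall volume u hδ.le]
        rw [finrank_euclideanSpace_fin]
        rw [← mul_assoc, ← ENNReal.ofReal_mul (by positivity), ENNReal.toReal_mul,
          ENNReal.toReal_ofReal (by positivity)]
        have : B * (δ ^ 3)⁻¹ * δ ^ 3 = B := by field_simp
        rw [this]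

lemma final_real {κ κb ε lam Vb : ℝ} (hκ : κ ∈ Ioo (0:ℝ) (1/2)) (hκb : κb ∈ Ioo (0:ℝ) (κ/2))
    (hVb : 0 ≤ Vb) (hε : 0 < ε) (hεlam : ε ≤ lam) :
    ε ^ (-(3:ℝ)/2 - κb + 1) / (-(-(3:ℝ)/2 - κb + 1)) *
        (Real.sqrt 3 * ε * (lam ^ 4)⁻¹ * Vb * (4 * lam) ^ 3 * Vb)
      ≤ (128 * Real.sqrt 3 * Vb ^ 2 + 1) * lam ^ (-(1:ℝ)/2 - κ) * ε ^ (κ - κb) := by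
  have hlam : 0 < lam := hε.trans_le hεlam
  have h3 : (0:ℝ) ≤ Real.sqrt 3 := Real.sqrt_nonneg 3
  set q : ℝ := -(3:ℝ)/2 - κb + 1 with hq
  have e1 : ε ^ q * ε = ε ^ ((1:ℝ)/2 - κ) * ε ^ (κ - κb) := by
    calc ε ^ q * ε = ε ^ q * ε ^ (1:ℝ) := by rw [Real.rpow_one]
      _ = ε ^ (q + 1) := (Real.rpow_add hε _ _).symm
      _ = ε ^ ((1:ℝ)/2 - κ + (κ - κb)) := by congr 1; rw [hq]; ring
      _ = ε ^ ((1:ℝ)/2 - κ) * ε ^ (κ - κb) := Real.rpow_add hε _ _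
  have e2 : ε ^ ((1:ℝ)/2 - κ) ≤ lam ^ ((1:ℝ)/2 - κ) :=
    Real.rpow_le_rpow hε.le hεlam (by linarith [hκ.2])
  have e3 : lam ^ ((1:ℝ)/2 - κ) * ((lam ^ 4)⁻¹ * lam ^ 3) = lam ^ (-(1:ℝ)/2 - κ) := by
    have h1 : ((lam:ℝ) ^ 4)⁻¹ * lam ^ 3 = lam ^ (-1:ℝ) := by
      rw [Real.rpow_neg_one]
      field_simp
    rw [h1, ← Real.rpow_add hlam]
    congr 1
    ring
  have hqneg : (0:ℝ) < -q := by rw [hq]; linarith [hκb.1]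
  have hεq : 0 ≤ ε ^ q := Real.rpow_nonneg hε.le q
  have hdiv : ε ^ q / (-q) ≤ 2 * ε ^ q := by
    have hhalf : (1:ℝ)/2 ≤ -q := by rw [hq]; linarith [hκb.1]
    calc ε ^ q / (-q) ≤ ε ^ q / (1/2) :=
          div_le_div_of_nonneg_left hεq (by norm_num) hhalf
      _ = 2 * ε ^ q := by ring
  have hSnn : 0 ≤ Real.sqrt 3 * ε * (lam ^ 4)⁻¹ * Vb * (4 * lam) ^ 3 * Vb := by positivity
  have key : ε ^ q * ε * ((lam ^ 4)⁻¹ * lam ^ 3) ≤ lam ^ (-(1:ℝ)/2 - κ) * ε ^ (κ - κb) := by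
    rw [e1]
    have hεκ : 0 ≤ ε ^ (κ - κb) := Real.rpow_nonneg hε.le _
    calc ε ^ ((1:ℝ)/2 - κ) * ε ^ (κ - κb) * ((lam ^ 4)⁻¹ * lam ^ 3)
        ≤ lam ^ ((1:ℝ)/2 - κ) * ε ^ (κ - κb) * ((lam ^ 4)⁻¹ * lam ^ 3) := by
          refine mul_le_mul_of_nonneg_right (mul_le_mul_of_nonneg_right e2 hεκ) (by positivity)
      _ = lam ^ ((1:ℝ)/2 - κ) * ((lam ^ 4)⁻¹ * lam ^ 3) * ε ^ (κ - κb) := by ring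
      _ = lam ^ (-(1:ℝ)/2 - κ) * ε ^ (κ - κb) := by rw [e3]
  calc ε ^ q / (-q) * (Real.sqrt 3 * ε * (lam ^ 4)⁻¹ * Vb * (4 * lam) ^ 3 * Vb)
      ≤ 2 * ε ^ q * (Real.sqrt 3 * ε * (lam ^ 4)⁻¹ * Vb * (4 * lam) ^ 3 * Vb) :=
        mul_le_mul_of_nonneg_right hdiv hSnn
    _ = 128 * Real.sqrt 3 * Vb ^ 2 * (ε ^ q * ε * ((lam ^ 4)⁻¹ * lam ^ 3)) := by ring
    _ ≤ 128 * Real.sqrt 3 * Vb ^ 2 * (lam ^ (-(1:ℝ)/2 - κ) * ε ^ (κ - κb)) :=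
        mul_le_mul_of_nonneg_left key (by positivity)
    _ ≤ (128 * Real.sqrt 3 * Vb ^ 2 + 1) * lam ^ (-(1:ℝ)/2 - κ) * ε ^ (κ - κb) := by
        have h1 : 0 ≤ lam ^ (-(1:ℝ)/2 - κ) * ε ^ (κ - κb) :=
          mul_nonneg (Real.rpow_nonneg hlam.le _) (Real.rpow_nonneg hε.le _)
        nlinarith

/-- Intermediate regime (`ε ≤ δ ≤ λ`) of the Besov `B^{1/2+κ̄}_{1,1}` bound
on `Ψ_ε^λ`: testing against rescaled test functions `η_u^δ` at scales `ε ≤ δ ≤ λ` yields a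
total contribution of order `λ^{-1/2-κ} ε^{κ-κ̄}`. -/
theorem besov_bound_intermediate_scales :
    ∀ κ κb : ℝ, κ ∈ Ioo (0 : ℝ) (1 / 2) → κb ∈ Ioo (0 : ℝ) (κ / 2) →
      ∃ C : ℝ, 0 < C ∧
        ∀ (x : EuclideanSpace ℝ (Fin 3)) (ε lam : ℝ), 0 < ε → ε ≤ lam → lam ≤ 1 →
          ∀ ψ : EuclideanSpace ℝ (Fin 3) → ℝ,
            LipschitzWith 1 ψ → (∀ z, |ψ z| ≤ 1) →
            Function.support ψ ⊆ Metric.closedBall 0 1 →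
            (∫⁻ δ in Ioc ε lam, ∫⁻ u : EuclideanSpace ℝ (Fin 3),
                ENNReal.ofReal (δ ^ (-(3 : ℝ) / 2 - κb) *
                  ⨆ η ∈ testSet, |∫ v, PsiDiff ψ x lam ε v * scaledTest η u δ v|))
              ≤ ENNReal.ofReal (C * lam ^ (-(1 : ℝ) / 2 - κ) * ε ^ (κ - κb)) := by
  intro κ κb hκ hκb
  set V : ENNReal := volume (Metric.ball (0 : EuclideanSpace ℝ (Fin 3)) 1) with hV
  set Vb : ℝ := V.toReal with hVb
  have hVfin : V ≠ ⊤ := measure_ball_lt_top.ne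
  have hVbnn : 0 ≤ Vb := ENNReal.toReal_nonneg
  refine ⟨128 * Real.sqrt 3 * Vb ^ 2 + 1, by positivity, ?_⟩
  intro x ε lam hε hεlam hlam1 ψ hψ hb hsupp
  have hlam : 0 < lam := hε.trans_le hεlam
  set B : ℝ := Real.sqrt 3 * ε * (lam ^ 4)⁻¹ with hB
  have hBnn : 0 ≤ B := by positivity
  have hsup_le : ∀ δ : ℝ, 0 < δ → ∀ u,
      (⨆ η ∈ testSet, |∫ v, PsiDiff ψ x lam ε v * scaledTest η u δ v|) ≤ B * Vb := by
    intro δ hδ u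
    refine Real.iSup_le (fun η => Real.iSup_le (fun hη => ?_) (by positivity)) (by positivity)
    exact key_integral_bound hε hlam hδ hψ hb hη x u
  have hsqrt3 : Real.sqrt 3 ≤ 2 := by
    nlinarith [Real.sq_sqrt (show (0:ℝ) ≤ 3 by norm_num), Real.sqrt_nonneg 3]
  have hsup_zero : ∀ δ ∈ Ioc ε lam, ∀ u : EuclideanSpace ℝ (Fin 3), 4 * lam < dist u x →
      (⨆ η ∈ testSet, |∫ v, PsiDiff ψ x lam ε v * scaledTest η u δ v|) ≤ 0 := by
    intro δ hδ u hu
    have hδ0 : 0 < δ := hε.trans hδ.1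
    refine Real.iSup_le (fun η => Real.iSup_le (fun hη => ?_) le_rfl) le_rfl
    have hzero : ∀ v, PsiDiff ψ x lam ε v * scaledTest η u δ v = 0 := by
      intro v
      by_cases hv : dist v x ≤ lam + Real.sqrt 3 * ε
      · have hεd : Real.sqrt 3 * ε ≤ 2 * lam := by nlinarith [Real.sqrt_nonneg 3]
        have htri := dist_triangle u v x
        have hdd : δ < dist v u := by
          rw [dist_comm v u]
          have hδlam := hδ.2
          linarith
        rw [scaledTest_eq_zero hδ0 hη.2.2 hdd, mul_zero]
      · push_neg at hv
        rw [PsiDiff_eq_zero hε hlam hsupp hv, zero_mul]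
    have hint0 : (∫ v, PsiDiff ψ x lam ε v * scaledTest η u δ v) = 0 := by
      simp only [hzero, integral_zero]
    rw [hint0, abs_zero]
  have step_u : ∀ δ ∈ Ioc ε lam,
      (∫⁻ u : EuclideanSpace ℝ (Fin 3), ENNReal.ofReal (δ ^ (-(3:ℝ)/2 - κb) *
          ⨆ η ∈ testSet, |∫ v, PsiDiff ψ x lam ε v * scaledTest η u δ v|))
        ≤ ENNReal.ofReal (δ ^ (-(3:ℝ)/2 - κb)) *
            (ENNReal.ofReal (B * Vb * (4 * lam) ^ 3) * V) := by
    intro δ hδ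
    have hδ0 : 0 < δ := hε.trans hδ.1
    have hδp : 0 ≤ δ ^ (-(3:ℝ)/2 - κb) := Real.rpow_nonneg hδ0.le _
    calc (∫⁻ u : EuclideanSpace ℝ (Fin 3), ENNReal.ofReal (δ ^ (-(3:ℝ)/2 - κb) *
            ⨆ η ∈ testSet, |∫ v, PsiDiff ψ x lam ε v * scaledTest η u δ v|))
        ≤ ∫⁻ u : EuclideanSpace ℝ (Fin 3), (Metric.closedBall x (4 * lam)).indicator
            (fun _ => ENNReal.ofReal (δ ^ (-(3:ℝ)/2 - κb) * (B * Vb))) u := by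
          refine lintegral_mono fun u => ?_
          by_cases hu : dist u x ≤ 4 * lam
          · rw [indicator_of_mem (by rwa [Metric.mem_closedBall])]
            exact ENNReal.ofReal_le_ofReal
              (mul_le_mul_of_nonneg_left (hsup_le δ hδ0 u) hδp)
          · rw [indicator_of_notMem (by rwa [Metric.mem_closedBall])]
            push_neg at hu
            have h0 : δ ^ (-(3:ℝ)/2 - κb) *
                (⨆ η ∈ testSet, |∫ v, PsiDiff ψ x lam ε v * scaledTest η u δ v|) ≤ 0 := by
              have := hsup_zero δ hδ u hu
              nlinarith
            calc ENNReal.ofReal _ ≤ ENNReal.ofReal (0:ℝ) := ENNReal.ofReal_le_ofReal h0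
              _ = 0 := ENNReal.ofReal_zero
      _ = ENNReal.ofReal (δ ^ (-(3:ℝ)/2 - κb) * (B * Vb)) *
            volume (Metric.closedBall x (4 * lam)) :=
          lintegral_indicator_const measurableSet_closedBall _
      _ = ENNReal.ofReal (δ ^ (-(3:ℝ)/2 - κb)) *
            (ENNReal.ofReal (B * Vb * (4 * lam) ^ 3) * V) := by
          rw [Measure.addHaar_closedBall volume x (by positivity : (0:ℝ) ≤ 4 * lam),
            finrank_euclideanSpace_fin,
            ENNReal.ofReal_mul hδp,
            ENNReal.ofReal_mul (mul_nonneg hBnn hVbnn), ← hV]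
          ring
  set c : ENNReal := ENNReal.ofReal (B * Vb * (4 * lam) ^ 3) * V with hc
  have hcfin : c ≠ ⊤ := ENNReal.mul_ne_top ENNReal.ofReal_ne_top hVfin
  have hp1 : (-(3:ℝ)/2 - κb) < -1 := by linarith [hκb.1]
  calc (∫⁻ δ in Ioc ε lam, ∫⁻ u : EuclideanSpace ℝ (Fin 3),
          ENNReal.ofReal (δ ^ (-(3:ℝ)/2 - κb) *
            ⨆ η ∈ testSet, |∫ v, PsiDiff ψ x lam ε v * scaledTest η u δ v|))
      ≤ ∫⁻ δ in Ioc ε lam, ENNReal.ofReal (δ ^ (-(3:ℝ)/2 - κb)) * c :=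
        setLIntegral_mono' measurableSet_Ioc step_u
    _ = (∫⁻ δ in Ioc ε lam, ENNReal.ofReal (δ ^ (-(3:ℝ)/2 - κb))) * c :=
        lintegral_mul_const' c _ hcfin
    _ ≤ ENNReal.ofReal (ε ^ ((-(3:ℝ)/2 - κb) + 1) / (-((-(3:ℝ)/2 - κb) + 1))) * c :=
        mul_le_mul_left (lintegral_rpow_Ioc_le hε hεlam hp1) c
    _ = ENNReal.ofReal (ε ^ (-(3:ℝ)/2 - κb + 1) / (-(-(3:ℝ)/2 - κb + 1)) *
          (Real.sqrt 3 * ε * (lam ^ 4)⁻¹ * Vb * (4 * lam) ^ 3 * Vb)) := by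
        have hqnn : (0:ℝ) ≤ ε ^ (-(3:ℝ)/2 - κb + 1) / (-(-(3:ℝ)/2 - κb + 1)) :=
          div_nonneg (Real.rpow_nonneg hε.le _) (by linarith [hκb.1])
        rw [hc, ← ENNReal.ofReal_toReal hVfin, ← hVb,
          ← ENNReal.ofReal_mul (mul_nonneg (mul_nonneg hBnn hVbnn) (by positivity : (0:ℝ) ≤ (4*lam)^3)),
          ← ENNReal.ofReal_mul hqnn]
    _ ≤ ENNReal.ofReal ((128 * Real.sqrt 3 * Vb ^ 2 + 1) * lam ^ (-(1:ℝ)/2 - κ) *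
          ε ^ (κ - κb)) :=
        ENNReal.ofReal_le_ofReal (final_real hκ hκb hVbnn hε hεlam)
end
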